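/- arXiv:1308.2420 — 5 statements merged into one kernel-verified Lean document; each statement's English description precedes it below -/
import Mathlib

section
/- Let n, r ≥ 2 be integers. If the variety C_r(N_n) is irreducible in the Zariski topology, then for every (x_1,…,x_r) ∈ C_r(N_n), the (not necessarily unital) associative k-subalgebra ⟨x_1,…,x_r⟩ of Mat_n(k) generated by x_1,…,x_r has dimension at most n − 1. -/
open MvPolynomial Matrix TopologicalSpace

/-- The Zariski topology on `r`-tuples of `n × n` matrices over `k`, identified with
affine space `k^(r·n²)`: the topology generated by complements of hypersurfaces
(its closed sets are exactly the common zero loci of families of polynomials in the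
matrix entries). -/
noncomputable def matTupleZariski (k : Type*) [CommRing k] (n r : ℕ) :
    TopologicalSpace (Fin r → Matrix (Fin n) (Fin n) k) :=
  TopologicalSpace.generateFrom
    {U | ∃ p : MvPolynomial (Fin r × Fin n × Fin n) k,
      U = {x | MvPolynomial.eval (fun q => x q.1 q.2.1 q.2.2) p ≠ 0}}

/-- `C_r(N_n)`: the set of commuting `r`-tuples of nilpotent `n × n` matrices. -/
def nilCommTuples (k : Type*) [Field k] (n r : ℕ) :
    Set (Fin r → Matrix (Fin n) (Fin n) k) :=
  {x | (∀ i, IsNilpotent (x i)) ∧ ∀ i j, x i * x j = x j * x i}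

set_option linter.unusedSectionVars false

open Matrix

section MatMon
variable {M : Type*}

/-- Ordered monomial: product of `y i ^ α i` in index order. -/
def matMon [Monoid M] {r : ℕ} (y : Fin r → M) (α : Fin r → ℕ) : M :=
  (List.ofFn fun i => y i ^ α i).prod

lemma Commute.matMon_right [Monoid M] {r : ℕ} {y : Fin r → M} {z : M}
    (h : ∀ i, Commute z (y i)) (α : Fin r → ℕ) : Commute z (matMon y α) := by
  refine Commute.list_prod_right _ _ fun w hw => ?_
  obtain ⟨i, rfl⟩ := List.mem_ofFn.1 hw
  exact (h i).pow_right _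

lemma matMon_zero [Monoid M] {r : ℕ} (y : Fin r → M) : matMon y 0 = 1 := by
  refine List.prod_eq_one fun w hw => ?_
  obtain ⟨i, rfl⟩ := List.mem_ofFn.1 hw
  simp

lemma matMon_mul [Monoid M] : ∀ {r : ℕ} (y : Fin r → M) (α β : Fin r → ℕ),
    (∀ i j, Commute (y i) (y j)) → matMon y α * matMon y β = matMon y (α + β) := by
  intro r
  induction r with
  | zero => intro y α β _; simp [matMon]
  | succ m ih =>
    intro y α β hc
    have hexp : ∀ (γ : Fin (m+1) → ℕ),
        matMon y γ = y 0 ^ γ 0 * matMon (y ∘ Fin.succ) (γ ∘ Fin.succ) := by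
      intro γ; simp [matMon, List.ofFn_succ, Function.comp]
    rw [hexp α, hexp β, hexp (α + β)]
    have h1 : Commute (matMon (y ∘ Fin.succ) (α ∘ Fin.succ)) (y 0 ^ β 0) :=
      ((Commute.matMon_right (fun i => (hc 0 (i.succ)) ) _).symm).pow_right _
    calc y 0 ^ α 0 * matMon (y ∘ Fin.succ) (α ∘ Fin.succ) * (y 0 ^ β 0 * matMon (y ∘ Fin.succ) (β ∘ Fin.succ))
        = y 0 ^ α 0 * (matMon (y ∘ Fin.succ) (α ∘ Fin.succ) * y 0 ^ β 0) * matMon (y ∘ Fin.succ) (β ∘ Fin.succ) := by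
          simp [mul_assoc]
      _ = y 0 ^ α 0 * (y 0 ^ β 0 * matMon (y ∘ Fin.succ) (α ∘ Fin.succ)) * matMon (y ∘ Fin.succ) (β ∘ Fin.succ) := by
          rw [h1.eq]
      _ = (y 0 ^ α 0 * y 0 ^ β 0) * (matMon (y ∘ Fin.succ) (α ∘ Fin.succ) * matMon (y ∘ Fin.succ) (β ∘ Fin.succ)) := by
          simp [mul_assoc]
      _ = y 0 ^ (α + β) 0 * matMon (y ∘ Fin.succ) ((α + β) ∘ Fin.succ) := by
          rw [← pow_add, ih (y ∘ Fin.succ) (α ∘ Fin.succ) (β ∘ Fin.succ) (fun i j => hc i.succ j.succ)]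
          rfl

lemma matMon_single [Monoid M] : ∀ {r : ℕ} (y : Fin r → M) (j : Fin r),
    matMon y (Pi.single j 1) = y j := by
  intro r
  induction r with
  | zero => exact fun _ j => j.elim0
  | succ m ih =>
    intro y j
    have hexp : ∀ (γ : Fin (m+1) → ℕ),
        matMon y γ = y 0 ^ γ 0 * matMon (y ∘ Fin.succ) (γ ∘ Fin.succ) := by
      intro γ; simp [matMon, List.ofFn_succ, Function.comp]
    rw [hexp]
    rcases Fin.eq_zero_or_eq_succ j with rfl | ⟨j', rfl⟩
    · have : (Pi.single (0 : Fin (m+1)) 1 : Fin (m+1) → ℕ) ∘ Fin.succ = 0 := by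
        funext i; simp [Pi.single_apply, (Fin.succ_ne_zero i)]
      rw [this, matMon_zero]
      simp
    · have h0 : (Pi.single j'.succ 1 : Fin (m+1) → ℕ) 0 = 0 := by
        simp [Pi.single_apply, (Fin.succ_ne_zero j').symm]
      have hs : (Pi.single j'.succ 1 : Fin (m+1) → ℕ) ∘ Fin.succ = Pi.single j' 1 := by
        funext i; simp [Pi.single_apply, Fin.succ_inj]
      rw [h0, hs, ih]
      simp

lemma matMon_pow [Monoid M] {r : ℕ} (y : Fin r → M) (α : Fin r → ℕ)
    (hc : ∀ i j, Commute (y i) (y j)) (m : ℕ) : matMon y α ^ m = matMon y (m • α) := by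
  induction m with
  | zero => simp [matMon_zero]
  | succ t ih =>
    rw [pow_succ, ih, matMon_mul _ _ _ hc, succ_nsmul]

lemma matMon_eq_zero [MonoidWithZero M] {r : ℕ} (y : Fin r → M) (α : Fin r → ℕ)
    (h : ∃ i, y i ^ α i = 0) : matMon y α = 0 := by
  obtain ⟨i, hi⟩ := h
  exact List.prod_eq_zero (List.mem_ofFn.2 ⟨i, hi⟩)

end MatMon
open Matrix Module Submodule
section Central
variable {k : Type*} [Field k] {n : ℕ}

lemma card_le_finrank_of_mem_span {V : Type*} [AddCommGroup V] [Module k V]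
    [FiniteDimensional k V] {ι : Type*} [Fintype ι] {W : Submodule k V} {v : ι → V}
    (hv : ∀ i, v i ∈ W) (hli : LinearIndependent k v) : Fintype.card ι ≤ finrank k W := by
  have hli' : LinearIndependent k (fun i => (⟨v i, hv i⟩ : W)) := by
    apply LinearIndependent.of_comp W.subtype
    convert hli
    rfl
  exact hli'.fintype_card_le_finrank

lemma matrix_pow_eq_zero_of_isNilpotent {N : Matrix (Fin n) (Fin n) k}
    (h : IsNilpotent N) : N ^ n = 0 := by
  set φ := Matrix.toLinAlgEquiv' N with hφdef
  have hφ : IsNilpotent φ := by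
    obtain ⟨m, hm⟩ := h
    exact ⟨m, by rw [hφdef, ← map_pow, hm, map_zero]⟩
  have h3 := φ.aeval_self_charpoly
  rw [hφ.charpoly_eq_X_pow_finrank, map_pow, Polynomial.aeval_X] at h3
  rw [Module.finrank_fin_fun] at h3
  apply (Matrix.toLinAlgEquiv' (R := k) (n := Fin n)).injective
  rw [map_pow, map_zero]
  exact h3

lemma finrank_ker_pow_le {V : Type*} [AddCommGroup V] [Module k V] [FiniteDimensional k V]
    (f : Module.End k V) (m : ℕ) :
    finrank k (LinearMap.ker (f ^ m)) ≤ m * finrank k (LinearMap.ker f) := by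
  induction m with
  | zero => simp [pow_zero, Module.End.one_eq_id, LinearMap.ker_id]
  | succ t ih =>
    set K := LinearMap.ker (f ^ (t + 1))
    set g : K →ₗ[k] V := f.comp K.subtype with hg
    have hrange : LinearMap.range g ≤ LinearMap.ker (f ^ t) := by
      rintro - ⟨⟨w, hw⟩, rfl⟩
      have : (f ^ (t + 1)) w = 0 := hw
      rw [pow_succ] at this
      simpa [hg] using this
    have hker : finrank k (LinearMap.ker g) ≤ finrank k (LinearMap.ker f) := by
      have heq : finrank k (LinearMap.ker g) =
          finrank k (Submodule.map K.subtype (LinearMap.ker g)) :=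
        (Submodule.equivMapOfInjective _ (Submodule.injective_subtype K) _).finrank_eq
      rw [heq]
      apply Submodule.finrank_mono
      rintro - ⟨⟨w, hw⟩, hgw, rfl⟩
      simpa [hg] using hgw
    calc finrank k K = finrank k (LinearMap.range g) + finrank k (LinearMap.ker g) :=
          (LinearMap.finrank_range_add_finrank_ker g).symm
      _ ≤ t * finrank k (LinearMap.ker f) + finrank k (LinearMap.ker f) :=
          Nat.add_le_add (le_trans (Submodule.finrank_mono hrange) ih) hker
      _ = (t + 1) * finrank k (LinearMap.ker f) := by ring

lemma mulVecLin_pow (N : Matrix (Fin n) (Fin n) k) (m : ℕ) :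
    (N ^ m).mulVecLin = N.mulVecLin ^ m := by
  induction m with
  | zero => simp [pow_zero, Matrix.mulVecLin_one, Module.End.one_eq_id]
  | succ t ih => rw [pow_succ, Matrix.mulVecLin_mul, ih, pow_succ]; rfl

lemma mem_span_pows_of_commute {N A : Matrix (Fin n) (Fin n) k} (hn : 2 ≤ n)
    (hNnil : IsNilpotent N)
    (hreg : ∃ c d : Fin (n-1) ↪ Fin n, (N.submatrix c d).det ≠ 0)
    (hA : Commute N A) (hAnil : IsNilpotent A) :
    A ∈ span k (Set.range fun j : Fin (n-1) => N ^ ((j : ℕ) + 1)) := by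
  classical
  obtain ⟨c, d, hcd⟩ := hreg
  set f := N.mulVecLin with hf
  have hNn : N ^ n = 0 := matrix_pow_eq_zero_of_isNilpotent hNnil
  have hfn : f ^ n = 0 := by rw [hf, ← mulVecLin_pow, hNn, Matrix.mulVecLin_zero]
  -- kernel of f has dimension ≤ 1
  have hker1 : finrank k (LinearMap.ker f) ≤ 1 := by
    have hu_mem : ∀ j : Fin (n-1), Nᵀ (d j) ∈ LinearMap.range f := by
      intro j
      rw [hf, Matrix.range_mulVecLin]
      exact subset_span ⟨d j, rfl⟩
    have hu_li : LinearIndependent k (fun j : Fin (n-1) => Nᵀ (d j)) := by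
      rw [Fintype.linearIndependent_iff]
      intro g hg
      by_contra hne
      push_neg at hne
      obtain ⟨j1, hj1⟩ := hne
      have hB : (N.submatrix c d).mulVec g = 0 := by
        funext i
        have h0 := congrFun hg (c i)
        rw [Finset.sum_apply] at h0
        simp only [Pi.smul_apply, Matrix.transpose_apply, smul_eq_mul, Pi.zero_apply] at h0
        simp only [Matrix.mulVec, dotProduct, Matrix.submatrix_apply, Pi.zero_apply]
        rw [← h0]
        exact Finset.sum_congr rfl fun j _ => mul_comm _ _
      exact hcd (Matrix.exists_mulVec_eq_zero_iff.1
        ⟨g, fun h => hj1 (congrFun h j1), hB⟩)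
    have hcard := card_le_finrank_of_mem_span hu_mem hu_li
    rw [Fintype.card_fin] at hcard
    have hrn := LinearMap.finrank_range_add_finrank_ker f
    rw [Module.finrank_fin_fun] at hrn
    omega
  -- f ^ (n-1) ≠ 0
  have hfn1 : f ^ (n - 1) ≠ 0 := by
    intro h0
    have : LinearMap.ker (f ^ (n - 1)) = ⊤ := by rw [h0]; exact LinearMap.ker_zero
    have h2 := finrank_ker_pow_le f (n - 1)
    rw [this, finrank_top, Module.finrank_fin_fun] at h2
    have := le_trans h2 (Nat.mul_le_mul_left _ hker1)
    omega
  obtain ⟨v, hv⟩ : ∃ v, (f ^ (n - 1)) v ≠ 0 := by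
    by_contra h
    push_neg at h
    exact hfn1 (LinearMap.ext fun w => h w)
  -- basis from the cyclic vector
  set b : Fin n → (Fin n → k) := fun i => (f ^ (i : ℕ)) v with hb
  have hbli : LinearIndependent k b := by
    rw [Fintype.linearIndependent_iff]
    intro g hg
    by_contra hne
    push_neg at hne
    obtain ⟨i1, hi1⟩ := hne
    set s := Finset.univ.filter (fun i : Fin n => g i ≠ 0) with hs
    have hsne : s.Nonempty := ⟨i1, by simp [hs, hi1]⟩
    set i0 := s.min' hsne with hi0def
    have hgi0 : g i0 ≠ 0 := (Finset.mem_filter.1 (s.min'_mem hsne)).2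
    have hmin : ∀ j : Fin n, j < i0 → g j = 0 := by
      intro j hj
      by_contra hjg
      exact absurd (s.min'_le j (by simp [hs, hjg])) (not_le.2 hj)
    have happ : (f ^ (n - 1 - (i0 : ℕ))) (∑ i, g i • b i) = 0 := by
      rw [hg, map_zero]
    rw [map_sum] at happ
    have hterm : ∀ i : Fin n, (f ^ (n - 1 - (i0 : ℕ))) (g i • b i)
        = g i • (f ^ (n - 1 - (i0 : ℕ) + (i : ℕ))) v := by
      intro i
      rw [_root_.map_smul]
      congr 1
      show (f ^ (n - 1 - (i0 : ℕ))) ((f ^ (i : ℕ)) v) = _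
      rw [← Module.End.mul_apply, ← pow_add]
    rw [Finset.sum_congr rfl (fun i _ => hterm i)] at happ
    rw [Finset.sum_eq_single i0] at happ
    · have he : n - 1 - (i0 : ℕ) + (i0 : ℕ) = n - 1 := by
        have := i0.isLt; omega
      rw [he] at happ
      exact hgi0 ((smul_eq_zero.1 happ).resolve_right hv)
    · intro j _ hji0
      rcases lt_or_gt_of_ne hji0 with hlt | hgt
      · rw [hmin j hlt, zero_smul]
      · have : f ^ (n - 1 - (i0 : ℕ) + (j : ℕ)) = 0 := by
          apply pow_eq_zero_of_le _ hfn
          have h1 := i0.isLt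
          have h2 : (i0 : ℕ) < (j : ℕ) := hgt
          omega
        rw [this, LinearMap.zero_apply, smul_zero]
    · intro h; exact absurd (Finset.mem_univ i0) h
  haveI : Nonempty (Fin n) := ⟨⟨0, by omega⟩⟩
  have hcardeq : Fintype.card (Fin n) = finrank k (Fin n → k) := by
    rw [Fintype.card_fin, Module.finrank_fin_fun]
  set B := basisOfLinearIndependentOfCardEqFinrank hbli hcardeq with hB
  have hBb : ∀ i, B i = b i := fun i =>
    congrFun (coe_basisOfLinearIndependentOfCardEqFinrank hbli hcardeq) i
  set g := A.mulVecLin with hgdef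
  have hfg : Commute f g := by
    apply LinearMap.ext
    intro w
    show N.mulVecLin (A.mulVecLin w) = A.mulVecLin (N.mulVecLin w)
    simp only [Matrix.mulVecLin_apply, Matrix.mulVec_mulVec]
    rw [hA.eq]
  set co : Fin n → k := fun i => B.repr (g v) i with hco
  have hgv : ∑ i, co i • (f ^ (i : ℕ)) v = g v := by
    have := B.sum_repr (g v)
    rw [← this]
    exact Finset.sum_congr rfl fun i _ => by rw [hBb i]
  -- A = ∑ co i • N ^ i
  have hAeq : A = ∑ i : Fin n, co i • N ^ (i : ℕ) := by
    have hmv : A.mulVecLin = (∑ i : Fin n, co i • N ^ (i : ℕ)).mulVecLin := by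
      have hsum : (∑ i : Fin n, co i • N ^ (i : ℕ)).mulVecLin
          = ∑ i : Fin n, co i • (f ^ (i : ℕ)) := by
        rw [← Matrix.toLin'_apply', map_sum]
        apply Finset.sum_congr rfl
        intro i _
        rw [_root_.map_smul, Matrix.toLin'_apply', mulVecLin_pow]
      rw [hsum]
      apply B.ext
      intro i
      rw [hBb i, hb]
      have hcomm : Commute g (f ^ (i : ℕ)) := (hfg.symm).pow_right _
      have hL : g ((f ^ (i : ℕ)) v) = (f ^ (i : ℕ)) (g v) := by
        rw [show g ((f ^ (i : ℕ)) v) = (g * f ^ (i : ℕ)) v from rfl, hcomm.eq]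
        rfl
      show g ((f ^ (i : ℕ)) v) = _
      rw [hL, LinearMap.sum_apply, ← hgv, map_sum]
      apply Finset.sum_congr rfl
      intro j _
      rw [LinearMap.smul_apply, _root_.map_smul]
      congr 1
      show (f ^ (i : ℕ)) ((f ^ (j : ℕ)) v) = (f ^ (j : ℕ)) ((f ^ (i : ℕ)) v)
      rw [← Module.End.mul_apply, ← Module.End.mul_apply, ← pow_add, ← pow_add, Nat.add_comm]
    apply Matrix.toLin'.injective
    rw [Matrix.toLin'_apply', Matrix.toLin'_apply']
    exact hmv
  -- the constant coefficient vanishes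
  set z : Fin n := ⟨0, by omega⟩ with hz
  set T := ∑ i ∈ Finset.univ.erase z, co i • N ^ (i : ℕ) with hT
  have hz0 : (z : ℕ) = 0 := rfl
  have hsplit : A = co z • (1 : Matrix (Fin n) (Fin n) k) + T := by
    rw [hAeq, ← Finset.add_sum_erase _ _ (Finset.mem_univ z), hz0, pow_zero]
  have hTnil : IsNilpotent T := by
    rw [hT]
    apply Commute.isNilpotent_sum
    · intro i hi
      have hi0 : (i : ℕ) ≠ 0 := by
        intro h
        apply (Finset.mem_erase.1 hi).1
        rw [hz]
        exact Fin.ext h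
      apply IsNilpotent.smul
      exact ⟨n, by rw [← pow_mul]; exact pow_eq_zero_of_le (Nat.le_mul_of_pos_left n (Nat.pos_of_ne_zero hi0)) hNn⟩
    · intro i j _ _
      exact ((Commute.pow_pow_self N (i : ℕ) (j : ℕ)).smul_left _).smul_right _
  have hAT : Commute A T := by
    rw [hsplit]
    exact (((Commute.one_left T).smul_left _)).add_left (Commute.refl T)
  have hc0 : co z = 0 := by
    have hnil : IsNilpotent (A - T) := hAT.isNilpotent_sub hAnil hTnil
    rw [hsplit] at hnil
    simp only [add_sub_cancel_right] at hnil
    obtain ⟨m, hm⟩ := hnil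
    rw [smul_pow, one_pow] at hm
    have hmz := congrFun (congrFun hm z) z
    rw [Matrix.smul_apply, Matrix.one_apply_eq, smul_eq_mul, mul_one] at hmz
    have : co z = 0 ∧ m ≠ 0 := pow_eq_zero_iff'.1 hmz
    exact this.1
  rw [hsplit, hc0, zero_smul, zero_add, hT]
  apply Submodule.sum_mem
  intro i hi
  apply Submodule.smul_mem
  apply subset_span
  have hi0 : (i : ℕ) ≠ 0 := by
    intro h
    exact (Finset.mem_erase.1 hi).1 (Fin.ext h)
  refine ⟨⟨(i : ℕ) - 1, by have := i.isLt; omega⟩, ?_⟩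
  simp only
  congr 1
  omega

end Central
open Matrix Module Submodule

section Minors
variable {k : Type*} [Field k] {d : ℕ} {ι : Type*} [Fintype ι] [DecidableEq ι]

lemma det_pick_eq_zero (v : Fin d → ι → k) (hv : ¬ LinearIndependent k v)
    (c : Fin d → ι) : (Matrix.of fun i j => v i (c j)).det = 0 := by
  rw [Fintype.not_linearIndependent_iff] at hv
  obtain ⟨g, hg, i0, hi0⟩ := hv
  rw [← Matrix.exists_vecMul_eq_zero_iff]
  refine ⟨g, fun h => hi0 (congrFun h i0), ?_⟩
  funext j
  have := congrFun hg (c j)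
  simpa [Matrix.vecMul, dotProduct] using this

lemma exists_det_pick_ne_zero (v : Fin d → ι → k) (hv : LinearIndependent k v) :
    ∃ c : Fin d → ι, (Matrix.of fun i j => v i (c j)).det ≠ 0 := by
  classical
  set M : Matrix (Fin d) ι k := Matrix.of fun i j => v i j with hM
  have hrankT : Mᵀ.rank = d := by
    rw [Matrix.rank, Matrix.range_mulVecLin, Matrix.col_transpose, Matrix.row]
    have hrange : Set.range M = Set.range v := rfl
    rw [hrange, finrank_span_eq_card hv, Fintype.card_fin]
  have hcols : Submodule.span k (Set.range Mᵀ) = ⊤ := by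
    apply Submodule.eq_top_of_finrank_eq
    have : finrank k (span k (Set.range Mᵀ)) = M.rank := by
      rw [Matrix.rank, Matrix.range_mulVecLin]; rfl
    rw [this, ← Matrix.rank_transpose, hrankT, Module.finrank_fin_fun]
  obtain ⟨b, hbsub, hbspan, hbli⟩ := exists_linearIndependent k (Set.range Mᵀ)
  haveI : Fintype b := ((Set.finite_range Mᵀ).subset hbsub).fintype
  have hcard : Fintype.card b = d := by
    rw [← Set.toFinset_card, ← finrank_span_set_eq_card hbli, hbspan, hcols, finrank_top,
      Module.finrank_fin_fun]
  let e : Fin d ≃ b := (Fintype.equivFinOfCardEq hcard).symm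
  have hchoice : ∀ i : Fin d, ∃ j : ι, Mᵀ j = (e i : Fin d → k) := fun i => hbsub (e i).2
  choose c hc using hchoice
  refine ⟨c, fun hdet => ?_⟩
  obtain ⟨g, hg0, hgS⟩ := (Matrix.exists_mulVec_eq_zero_iff).2 hdet
  have hsum : ∑ j : Fin d, g j • ((e j : b) : Fin d → k) = 0 := by
    funext i
    have := congrFun hgS i
    simp only [Matrix.mulVec, dotProduct, Matrix.of_apply, Pi.zero_apply] at this ⊢
    rw [Finset.sum_apply]
    simp only [Pi.smul_apply, smul_eq_mul]
    rw [← this]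
    apply Finset.sum_congr rfl
    intro j _
    rw [mul_comm]
    congr 1
    exact (congrFun (hc j) i).symm
  have hli' : LinearIndependent k (fun j : Fin d => ((e j : b) : Fin d → k)) :=
    hbli.comp e e.injective
  have := Fintype.linearIndependent_iff.1 hli' g hsum
  exact hg0 (funext fun j => this j)

end Minors

section Flatten
variable {k : Type*} [Field k] {n : ℕ}

/-- Flattening a matrix into a vector indexed by pairs, as a linear map. -/
def flattenM (k : Type*) [Field k] (n : ℕ) :
    Matrix (Fin n) (Fin n) k →ₗ[k] (Fin n × Fin n → k) where
  toFun A := fun pq => A pq.1 pq.2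
  map_add' _ _ := rfl
  map_smul' _ _ := rfl

lemma flattenM_ker : LinearMap.ker (flattenM k n) = ⊥ := by
  rw [LinearMap.ker_eq_bot']
  intro A hA
  ext p q
  exact congrFun hA (p, q)

lemma li_flatten {d : ℕ} {v : Fin d → Matrix (Fin n) (Fin n) k}
    (hv : LinearIndependent k v) : LinearIndependent k (fun i => flattenM k n (v i)) :=
  hv.map' (flattenM k n) flattenM_ker

lemma li_of_flatten {d : ℕ} {v : Fin d → Matrix (Fin n) (Fin n) k}
    (hv : LinearIndependent k (fun i => flattenM k n (v i))) : LinearIndependent k v :=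
  LinearIndependent.of_comp (flattenM k n) hv

end Flatten
section PolyLayer
open Topology
open MvPolynomial TopologicalSpace
variable (k : Type*) [Field k] (n r : ℕ)

/-- The generic matrices with polynomial-variable entries. -/
noncomputable def genMat : Fin r → Matrix (Fin n) (Fin n) (MvPolynomial (Fin r × Fin n × Fin n) k) :=
  fun i => Matrix.of fun p q => MvPolynomial.X (i, p, q)

noncomputable def zPoly (F : Fin n → (Fin r → ℕ)) (c : Fin n → Fin n × Fin n) :
    MvPolynomial (Fin r × Fin n × Fin n) k :=
  (Matrix.of fun i j => matMon (genMat k n r) (F i) (c j).1 (c j).2).det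

noncomputable def uPoly (i0 : Fin r) (c d : Fin (n-1) → Fin n) :
    MvPolynomial (Fin r × Fin n × Fin n) k :=
  (Matrix.of fun i j : Fin (n-1) => MvPolynomial.X ((i0, c i, d j) : Fin r × Fin n × Fin n)).det

def zSet : Set (Fin r → Matrix (Fin n) (Fin n) k) :=
  {x | ∀ F : Fin n → (Fin r → ℕ), (∀ i, F i ≠ 0) → ∀ c : Fin n → Fin n × Fin n,
    MvPolynomial.eval (fun q => x q.1 q.2.1 q.2.2) (zPoly k n r F c) = 0}

def uSet (i0 : Fin r) : Set (Fin r → Matrix (Fin n) (Fin n) k) :=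
  ⋃ c : Fin (n-1) ↪ Fin n, ⋃ d : Fin (n-1) ↪ Fin n,
    {x | MvPolynomial.eval (fun q => x q.1 q.2.1 q.2.2) (uPoly k n r i0 c d) ≠ 0}

variable {k n r}

lemma isOpen_basic (p : MvPolynomial (Fin r × Fin n × Fin n) k) :
    IsOpen[matTupleZariski k n r]
      {x | MvPolynomial.eval (fun q => x q.1 q.2.1 q.2.2) p ≠ 0} := by
  show TopologicalSpace.GenerateOpen _ _
  exact TopologicalSpace.GenerateOpen.basic _ ⟨p, rfl⟩

lemma isOpen_uSet (i0 : Fin r) : IsOpen[matTupleZariski k n r] (uSet k n r i0) := by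
  letI := matTupleZariski k n r
  exact isOpen_iUnion fun c => isOpen_iUnion fun d => isOpen_basic _

lemma isClosed_zSet : IsClosed[matTupleZariski k n r] (zSet k n r) := by
  letI := matTupleZariski k n r
  rw [← isOpen_compl_iff]
  have hc : (zSet k n r)ᶜ = ⋃ F : Fin n → (Fin r → ℕ), ⋃ (_ : ∀ i, F i ≠ 0),
      ⋃ c : Fin n → Fin n × Fin n,
      {x | MvPolynomial.eval (fun q => x q.1 q.2.1 q.2.2) (zPoly k n r F c) ≠ 0} := by
    ext x
    simp [zSet]
  rw [hc]
  exact isOpen_iUnion fun F => isOpen_iUnion fun hF => isOpen_iUnion fun c => isOpen_basic _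

lemma mapMatrix_matMon (x : Fin r → Matrix (Fin n) (Fin n) k) (α : Fin r → ℕ) :
    (matMon (genMat k n r) α).map (MvPolynomial.eval (fun q => x q.1 q.2.1 q.2.2)) =
      matMon x α := by
  set f : MvPolynomial (Fin r × Fin n × Fin n) k →+* k :=
    MvPolynomial.eval (fun q => x q.1 q.2.1 q.2.2) with hf
  have hgen : ∀ i, (genMat k n r i).map f = x i := by
    intro i
    ext p q
    simp [genMat, hf, Matrix.map_apply]
  show f.mapMatrix (matMon (genMat k n r) α) = matMon x α
  have hcomp : (⇑f.mapMatrix ∘ fun i => genMat k n r i ^ α i) = fun i => x i ^ α i := by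
    funext i
    show f.mapMatrix (genMat k n r i ^ α i) = x i ^ α i
    rw [map_pow, show f.mapMatrix (genMat k n r i) = (genMat k n r i).map f from rfl, hgen]
  rw [matMon, map_list_prod, List.map_ofFn, hcomp, matMon]

lemma eval_zPoly (x : Fin r → Matrix (Fin n) (Fin n) k) (F : Fin n → (Fin r → ℕ))
    (c : Fin n → Fin n × Fin n) :
    MvPolynomial.eval (fun q => x q.1 q.2.1 q.2.2) (zPoly k n r F c) =
      (Matrix.of fun i j => (matMon x (F i)) (c j).1 (c j).2).det := by
  set f : MvPolynomial (Fin r × Fin n × Fin n) k →+* k :=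
    MvPolynomial.eval (fun q => x q.1 q.2.1 q.2.2) with hf
  show f _ = _
  rw [zPoly, RingHom.map_det]
  congr 1
  ext i j
  rw [RingHom.mapMatrix_apply, Matrix.map_apply, Matrix.of_apply, Matrix.of_apply]
  have := congrFun (congrFun (mapMatrix_matMon x (F i)) (c j).1) (c j).2
  rw [← this]
  rfl

lemma eval_uPoly (x : Fin r → Matrix (Fin n) (Fin n) k) (i0 : Fin r)
    (c d : Fin (n-1) → Fin n) :
    MvPolynomial.eval (fun q => x q.1 q.2.1 q.2.2) (uPoly k n r i0 c d) =
      ((x i0).submatrix c d).det := by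
  set f : MvPolynomial (Fin r × Fin n × Fin n) k →+* k :=
    MvPolynomial.eval (fun q => x q.1 q.2.1 q.2.2) with hf
  show f _ = _
  rw [uPoly, RingHom.map_det]
  congr 1
  ext i j
  simp [Matrix.map_apply, Matrix.submatrix_apply, hf]

end PolyLayer

section Jordan
variable {k : Type*} [Field k] {n : ℕ}

/-- The shift (regular nilpotent Jordan) matrix. -/
def jmat (k : Type*) [Field k] (n : ℕ) : Matrix (Fin n) (Fin n) k :=
  Matrix.of fun p q => if (p : ℕ) + 1 = (q : ℕ) then 1 else 0

lemma jmat_pow (m : ℕ) (p q : Fin n) :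
    ((jmat k n) ^ m) p q = if (p : ℕ) + m = (q : ℕ) then 1 else 0 := by
  induction m generalizing q with
  | zero =>
    rw [pow_zero, Matrix.one_apply]
    congr 1
    simp [Fin.ext_iff, eq_comm]
  | succ t ih =>
    rw [pow_succ, Matrix.mul_apply]
    by_cases h : (p : ℕ) + t < n
    · set t0 : Fin n := ⟨(p : ℕ) + t, h⟩ with ht0
      rw [Finset.sum_eq_single t0]
      · rw [ih, jmat]
        simp only [ht0, Matrix.of_apply, if_pos rfl, one_mul]
        congr 1
        simp [Nat.add_assoc]
      · intro t' _ hne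
        rw [ih]
        have : ¬ ((p : ℕ) + t = (t' : ℕ)) := by
          intro hco
          exact hne (Fin.ext (by simp [ht0, hco]))
        rw [if_neg this, zero_mul]
      · intro hmem; exact absurd (Finset.mem_univ t0) hmem
    · have hz : ∀ t' : Fin n, ((jmat k n) ^ t) p t' * (jmat k n) t' q = 0 := by
        intro t'
        rw [ih]
        have : ¬ ((p : ℕ) + t = (t' : ℕ)) := by
          have := t'.isLt; omega
        rw [if_neg this, zero_mul]
      rw [Finset.sum_congr rfl fun t' _ => hz t', Finset.sum_const_zero]
      have : ¬ ((p : ℕ) + (t + 1) = (q : ℕ)) := by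
        have := q.isLt; omega
      rw [if_neg this]

lemma jmat_pow_n : (jmat k n) ^ n = 0 := by
  ext p q
  rw [jmat_pow]
  have : ¬ ((p : ℕ) + n = (q : ℕ)) := by have := q.isLt; omega
  rw [if_neg this]
  rfl

lemma jmat_isNilpotent : IsNilpotent (jmat k n) := ⟨n, jmat_pow_n⟩

lemma jmat_regular (hn : 2 ≤ n) :
    ∃ c d : Fin (n-1) ↪ Fin n, ((jmat k n).submatrix c d).det ≠ 0 := by
  have h1 : ∀ i : Fin (n-1), (i : ℕ) < n := fun i => by have := i.isLt; omega
  have h2 : ∀ i : Fin (n-1), (i : ℕ) + 1 < n := fun i => by have := i.isLt; omega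
  set cemb : Fin (n-1) ↪ Fin n :=
    ⟨fun i => ⟨(i : ℕ), h1 i⟩, fun a b hab => Fin.ext (by simpa [Fin.ext_iff] using hab)⟩ with hcemb
  set demb : Fin (n-1) ↪ Fin n :=
    ⟨fun i => ⟨(i : ℕ) + 1, h2 i⟩, fun a b hab => Fin.ext (by simpa [Fin.ext_iff] using hab)⟩ with hdemb
  refine ⟨cemb, demb, ?_⟩
  have hone : (jmat k n).submatrix ⇑cemb ⇑demb = 1 := by
    ext i j
    rw [Matrix.submatrix_apply]
    show (if (i : ℕ) + 1 = (j : ℕ) + 1 then (1:k) else 0)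
        = (1 : Matrix (Fin (n-1)) (Fin (n-1)) k) i j
    rw [Matrix.one_apply]
    by_cases h : i = j
    · rw [if_pos (by rw [h]), if_pos h]
    · rw [if_neg (fun hc => h (Fin.ext (Nat.succ_injective hc))), if_neg h]
  rw [hone, Matrix.det_one]
  exact one_ne_zero
end Jordan
section Main
open MvPolynomial TopologicalSpace Topology Module Submodule Matrix

variable {k : Type*} [Field k] {n r : ℕ}

lemma regular_of_mem_uSet {x : Fin r → Matrix (Fin n) (Fin n) k} {i0 : Fin r}
    (hx : x ∈ uSet k n r i0) :
    ∃ c d : Fin (n-1) ↪ Fin n, ((x i0).submatrix c d).det ≠ 0 := by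
  rw [uSet] at hx
  obtain ⟨c, hc⟩ := Set.mem_iUnion.1 hx
  obtain ⟨d, hd⟩ := Set.mem_iUnion.1 hc
  refine ⟨c, d, ?_⟩
  have : MvPolynomial.eval (fun q => x q.1 q.2.1 q.2.2) (uPoly k n r i0 c d) ≠ 0 := hd
  rwa [eval_uPoly] at this

lemma mem_zSet_of_regular (hn : 2 ≤ n)
    {x : Fin r → Matrix (Fin n) (Fin n) k} (hx : x ∈ nilCommTuples k n r)
    {i0 : Fin r} (hreg : ∃ c d : Fin (n-1) ↪ Fin n, ((x i0).submatrix c d).det ≠ 0) :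
    x ∈ zSet k n r := by
  intro F hF c
  rw [eval_zPoly]
  have hcomm : ∀ i j, Commute (x i) (x j) := fun i j => hx.2 i j
  have hxn : ∀ i, (x i) ^ n = 0 := fun i => matrix_pow_eq_zero_of_isNilpotent (hx.1 i)
  set N := x i0 with hN
  set W := span k (Set.range fun j : Fin (n-1) => N ^ ((j : ℕ) + 1)) with hW
  have hmem : ∀ i : Fin n, matMon x (F i) ∈ W := by
    intro i
    apply mem_span_pows_of_commute hn (hx.1 i0) hreg
    · exact Commute.matMon_right (fun j => hcomm i0 j) (F i)
    · obtain ⟨j, hj⟩ : ∃ j, F i j ≠ 0 := by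
        by_contra h; push_neg at h; exact hF i (funext h)
      refine ⟨n, ?_⟩
      rw [matMon_pow x (F i) hcomm n]
      apply matMon_eq_zero
      refine ⟨j, pow_eq_zero_of_le ?_ (hxn j)⟩
      have h1 : 1 ≤ F i j := Nat.one_le_iff_ne_zero.2 hj
      calc n = n * 1 := (Nat.mul_one n).symm
        _ ≤ n * F i j := Nat.mul_le_mul_left n h1
        _ = (n • F i) j := by simp [Nat.mul_comm]
  have hle : finrank k W ≤ n - 1 := by
    classical
    haveI : Fintype (Set.range fun j : Fin (n-1) => N ^ ((j : ℕ) + 1)) := Set.fintypeRange _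
    calc finrank k W ≤ (Set.range fun j : Fin (n-1) => N ^ ((j : ℕ) + 1)).toFinset.card :=
          finrank_span_le_card _
      _ ≤ n - 1 := by
          rw [Set.toFinset_card]
          calc Fintype.card (Set.range fun j : Fin (n-1) => N ^ ((j : ℕ) + 1))
              ≤ Fintype.card (Fin (n-1)) := Fintype.card_range_le _
            _ = n - 1 := Fintype.card_fin _
  have hdep : ¬ LinearIndependent k (fun i : Fin n => flattenM k n (matMon x (F i))) := by
    intro hli
    have hcard := card_le_finrank_of_mem_span hmem (li_of_flatten hli)
    rw [Fintype.card_fin] at hcard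
    omega
  exact det_pick_eq_zero _ hdep c

lemma finrank_le_of_mem_zSet (hn : 2 ≤ n)
    {x : Fin r → Matrix (Fin n) (Fin n) k} (hx : x ∈ nilCommTuples k n r)
    (hz : x ∈ zSet k n r) :
    Module.finrank k (NonUnitalAlgebra.adjoin k (Set.range x)) ≤ n - 1 := by
  classical
  have hcomm : ∀ i j, Commute (x i) (x j) := fun i j => hx.2 i j
  have hxn : ∀ i, (x i) ^ n = 0 := fun i => matrix_pow_eq_zero_of_isNilpotent (hx.1 i)
  set mset : Set (Matrix (Fin n) (Fin n) k) :=
    {y | ∃ α : Fin r → ℕ, α ≠ 0 ∧ y = matMon x α} with hmset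
  set P : Submodule k (Matrix (Fin n) (Fin n) k) := span k mset with hP
  have hmulset : ∀ a ∈ mset, ∀ b ∈ mset, a * b ∈ mset := by
    rintro a ⟨α, hα, rfl⟩ b ⟨β, hβ, rfl⟩
    refine ⟨α + β, ?_, (matMon_mul x α β hcomm)⟩
    intro h0
    apply hα
    funext i
    have h1 : α i + β i = 0 := by simpa using congrFun h0 i
    simp only [Pi.zero_apply]
    omega
  have hmul : ∀ a b : Matrix (Fin n) (Fin n) k, a ∈ P → b ∈ P → a * b ∈ P := by
    have hPP : P * P ≤ P := by
      rw [hP, span_mul_span]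
      apply span_le.2
      rintro - ⟨a, ha, b, hb, rfl⟩
      exact subset_span (hmulset a ha b hb)
    intro a b ha hb
    exact hPP (mul_mem_mul ha hb)
  set Salg : NonUnitalSubalgebra k (Matrix (Fin n) (Fin n) k) :=
    P.toNonUnitalSubalgebra hmul with hSalg
  have hadj : NonUnitalAlgebra.adjoin k (Set.range x) ≤ Salg := by
    apply NonUnitalAlgebra.adjoin_le
    rintro - ⟨j, rfl⟩
    show x j ∈ P
    apply subset_span
    refine ⟨Pi.single j 1, ?_, (matMon_single x j).symm⟩
    intro h
    have := congrFun h j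
    simp at this
  have h1 : Module.finrank k (NonUnitalAlgebra.adjoin k (Set.range x)) ≤ finrank k P := by
    have hsub : (NonUnitalAlgebra.adjoin k (Set.range x)).toSubmodule ≤ P :=
      fun y hy => hadj hy
    exact Submodule.finrank_mono hsub
  refine le_trans h1 ?_
  set B : Set (Fin r → ℕ) := {α | α ≠ 0 ∧ ∀ i, α i < n} with hB
  set T : Set (Matrix (Fin n) (Fin n) k) := matMon x '' B with hT
  have hPT : P ≤ span k T := by
    rw [hP]
    apply span_le.2
    rintro - ⟨α, hα, rfl⟩
    by_cases hbd : ∀ i, α i < n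
    · exact subset_span ⟨α, ⟨hα, hbd⟩, rfl⟩
    · push_neg at hbd
      obtain ⟨i, hi⟩ := hbd
      have : matMon x α = 0 := matMon_eq_zero x α ⟨i, pow_eq_zero_of_le hi (hxn i)⟩
      rw [this]
      exact zero_mem _
  refine le_trans (Submodule.finrank_mono hPT) ?_
  -- finrank of span T ≤ n - 1
  by_contra hcon
  push_neg at hcon
  have hnle : n ≤ finrank k (span k T) := by omega
  have hTfin : T.Finite := by
    apply Set.Finite.image
    apply Set.Finite.subset (Set.finite_range (fun β : Fin r → Fin n => fun i => (β i : ℕ)))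
    intro α hα
    exact ⟨fun i => ⟨α i, hα.2 i⟩, rfl⟩
  obtain ⟨b, hbT, hbspan, hbli⟩ := exists_linearIndependent k T
  haveI : Fintype b := (hTfin.subset hbT).fintype
  have hcardb : n ≤ Fintype.card b := by
    have := finrank_span_set_eq_card hbli
    rw [hbspan] at this
    rw [← Set.toFinset_card, ← this]
    exact hnle
  have he : Nonempty (Fin n ↪ b) := by
    apply Function.Embedding.nonempty_of_card_le
    rwa [Fintype.card_fin]
  obtain ⟨e⟩ := he
  set u : Fin n → Matrix (Fin n) (Fin n) k := fun i => ((e i : b) : Matrix (Fin n) (Fin n) k)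
    with hu
  have hu_li : LinearIndependent k u := hbli.comp e e.injective
  have hFex : ∀ i : Fin n, ∃ α : Fin r → ℕ, α ∈ B ∧ matMon x α = u i := fun i => hbT (e i).2
  choose F hF1 hF2 using hFex
  obtain ⟨c, hc⟩ := exists_det_pick_ne_zero (fun i => flattenM k n (u i)) (li_flatten hu_li)
  apply hc
  have hz' := hz F (fun i => (hF1 i).1) c
  rw [eval_zPoly] at hz'
  rw [← hz']
  congr 1
  ext i j
  rw [Matrix.of_apply, Matrix.of_apply, hF2 i]
  rfl

end Main

set_option maxHeartbeats 1000000 in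
/-- Let `n, r ≥ 2`. If `C_r(N_n)` is irreducible, then for every `(x₁, …, x_r) ∈ C_r(N_n)`
the non-unital `k`-subalgebra generated by `x₁, …, x_r` has dimension at most `n - 1`. -/
theorem finrank_adjoin_le_of_nilCommTuples_irreducible (k : Type*) [Field k]
    [IsAlgClosed k] (n r : ℕ) (hn : 2 ≤ n) (hr : 2 ≤ r) :
    letI := matTupleZariski k n r
    IsIrreducible (nilCommTuples k n r) →
      ∀ x ∈ nilCommTuples k n r,
        Module.finrank k (NonUnitalAlgebra.adjoin k (Set.range x)) ≤ n - 1 := by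
  intro hirr x hx
  set i0 : Fin r := ⟨0, by omega⟩ with hi0
  have hUopen := isOpen_uSet (k := k) (n := n) i0
  have hZclosed := isClosed_zSet (k := k) (n := n) (r := r)
  have hCU : (nilCommTuples k n r ∩ uSet k n r i0).Nonempty := by
    classical
    set w : Fin r → Matrix (Fin n) (Fin n) k := fun i => if i = i0 then jmat k n else 0 with hw
    have hwi0 : w i0 = jmat k n := by rw [hw]; simp
    refine ⟨w, ⟨?_, ?_⟩, ?_⟩
    · intro i
      rw [hw]
      by_cases h : i = i0 <;> simp [h, jmat_isNilpotent, IsNilpotent.zero]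
    · intro i j
      rw [hw]
      by_cases hi : i = i0 <;> by_cases hj : j = i0 <;> simp [hi, hj]
    · obtain ⟨c, d, hcd⟩ := jmat_regular (k := k) hn
      refine Set.mem_iUnion.2 ⟨c, Set.mem_iUnion.2 ⟨d, ?_⟩⟩
      simp only [Set.mem_setOf_eq]
      rw [eval_uPoly w i0 ⇑c ⇑d, hwi0]
      exact hcd
  have hxZ : x ∈ zSet k n r := by
    by_contra hxz
    have h2 : (nilCommTuples k n r ∩ (zSet k n r)ᶜ).Nonempty := ⟨x, hx, hxz⟩
    obtain ⟨y, hyC, hyU, hyZc⟩ := hirr.2 (uSet k n r i0) (zSet k n r)ᶜ hUopen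
      hZclosed.isOpen_compl hCU h2
    exact hyZc (mem_zSet_of_regular hn hyC (regular_of_mem_uSet hyU))
  exact finrank_le_of_mem_zSet hn hx hxZ
end

section
/- For all integers n ≥ 4 and r ≥ 4, the variety C_r(N_n) is reducible in the Zariski topology, i.e., it is not irreducible. -/
open MvPolynomial Matrix TopologicalSpace

namespace NilCommAux

variable {k : Type*} [Field k]

/-- Shift matrix with cutoff `c`: entry `(i,j)` is `1` iff `i+1 = j ∧ j < c`. -/
def shiftMat (k : Type*) [Field k] (n c : ℕ) : Matrix (Fin n) (Fin n) k :=
  Matrix.of fun i j => if (i : ℕ) + 1 = (j : ℕ) ∧ (j : ℕ) < c then 1 else 0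

lemma shiftMat_pow (n c m : ℕ) (hm : 1 ≤ m) :
    (shiftMat k n c) ^ m =
      Matrix.of (fun (i j : Fin n) =>
        if ((i : ℕ) + m = (j : ℕ) ∧ (j : ℕ) < c : Prop) then (1 : k) else 0) := by
  induction m with
  | zero => omega
  | succ m ih =>
    rcases Nat.eq_zero_or_pos m with hm0 | hm0
    · subst hm0; rw [pow_one]; ext i j; simp [shiftMat]
    · rw [pow_succ, ih hm0]
      ext i j
      simp only [Matrix.mul_apply, Matrix.of_apply, shiftMat]
      by_cases h : (i : ℕ) + (m + 1) = (j : ℕ) ∧ (j : ℕ) < c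
      · have hl : (i : ℕ) + m < n := by omega
        rw [Finset.sum_eq_single (⟨(i : ℕ) + m, hl⟩ : Fin n)]
        · simp only [Fin.val_mk]
          rw [if_pos h, if_pos (show True ∧ (i:ℕ)+m < c from ⟨trivial, by omega⟩),
             if_pos (show (i:ℕ)+m+1 = (j:ℕ) ∧ (j:ℕ) < c by omega)]
          exact one_mul 1
        · intro l _ hlne
          split_ifs with h1 h2
          · exact absurd (Fin.ext (by omega : (l:ℕ) = (i:ℕ)+m)) hlne
          · exact mul_zero _
          · exact zero_mul _
          · exact zero_mul _
        · intro hmem; exact absurd (Finset.mem_univ _) hmem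
      · rw [if_neg h]
        apply Finset.sum_eq_zero
        intro l _
        split_ifs <;> first | (exfalso; omega) | ring

lemma shiftMat_pow_apply (n c m : ℕ) (hm : 1 ≤ m) (i j : Fin n) :
    ((shiftMat k n c) ^ m) i j =
      if (i : ℕ) + m = (j : ℕ) ∧ (j : ℕ) < c then 1 else 0 := by
  rw [shiftMat_pow n c m hm]; rfl

lemma shiftMat_pow_n (n c : ℕ) (hn : 1 ≤ n) : (shiftMat k n c) ^ n = 0 := by
  rw [shiftMat_pow n c n hn]
  ext i j
  simp only [Matrix.of_apply, Matrix.zero_apply]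
  rw [if_neg]
  rintro ⟨h1, -⟩
  omega

lemma shiftMat_isNilpotent (n c : ℕ) (hn : 1 ≤ n) : IsNilpotent (shiftMat k n c) :=
  ⟨n, shiftMat_pow_n n c hn⟩

end NilCommAux

section B
open MvPolynomial Matrix
namespace NilCommAux
variable {k : Type*} [Field k]

/-- The `a`-th "word" in the tuple `x`: powers of `x 0` followed by `x 1, x 2, x 3`. -/
def wrd {R : Type*} [CommRing R] (n r : ℕ) (hn : 4 ≤ n) (hr : 4 ≤ r)
    (x : Fin r → Matrix (Fin n) (Fin n) R) (a : Fin n) : Matrix (Fin n) (Fin n) R :=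
  if (a : ℕ) < n - 3 then (x ⟨0, by omega⟩) ^ ((a : ℕ) + 1)
  else if (a : ℕ) = n - 3 then x ⟨1, by omega⟩
  else if (a : ℕ) = n - 2 then x ⟨2, by omega⟩
  else x ⟨3, by omega⟩

/-- Matrix coordinate positions used to test linear independence of the words. -/
def ps (n : ℕ) (hn : 4 ≤ n) (b : Fin n) : Fin n × Fin n :=
  if h : (b : ℕ) < n - 3 then (⟨0, by omega⟩, ⟨(b : ℕ) + 1, by omega⟩)
  else if (b : ℕ) = n - 3 then (⟨n - 2, by omega⟩, ⟨n - 3, by omega⟩)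
  else if (b : ℕ) = n - 2 then (⟨0, by omega⟩, ⟨n - 1, by omega⟩)
  else (⟨n - 2, by omega⟩, ⟨n - 1, by omega⟩)

lemma wrd_map {R S : Type*} [CommRing R] [CommRing S] (f : R →+* S) (n r : ℕ)
    (hn : 4 ≤ n) (hr : 4 ≤ r) (x : Fin r → Matrix (Fin n) (Fin n) R) (a : Fin n) :
    (wrd n r hn hr x a).map f = wrd n r hn hr (fun i => (x i).map f) a := by
  have hpow : ∀ (M : Matrix (Fin n) (Fin n) R) (m : ℕ), (M ^ m).map f = (M.map f) ^ m := by
    intro M m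
    simpa only [RingHom.mapMatrix_apply] using map_pow (f.mapMatrix) M m
  unfold wrd
  split_ifs <;> simp [hpow]

/-- The generic matrix tuple with polynomial-variable entries. -/
noncomputable def genMat (k : Type*) [Field k] (n r : ℕ) (i : Fin r) :
    Matrix (Fin n) (Fin n) (MvPolynomial (Fin r × Fin n × Fin n) k) :=
  Matrix.of fun a b => MvPolynomial.X (i, a, b)

lemma genMat_map (n r : ℕ) (x : Fin r → Matrix (Fin n) (Fin n) k) (i : Fin r) :
    (genMat k n r i).map (MvPolynomial.eval (fun q : Fin r × Fin n × Fin n =>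
      x q.1 q.2.1 q.2.2)) = x i := by
  ext a b
  simp [genMat, Matrix.map_apply]

/-- The polynomial cutting out `U`. -/
noncomputable def pPoly (k : Type*) [Field k] (n r : ℕ) (hn : 4 ≤ n) (hr : 4 ≤ r) :
    MvPolynomial (Fin r × Fin n × Fin n) k :=
  (Matrix.of fun a b =>
    wrd n r hn hr (genMat k n r) a (ps n hn b).1 (ps n hn b).2).det

/-- The polynomial cutting out `V`. -/
noncomputable def qPoly (k : Type*) [Field k] (n r : ℕ) (hn : 4 ≤ n) (hr : 4 ≤ r) :
    MvPolynomial (Fin r × Fin n × Fin n) k :=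
  ((genMat k n r ⟨0, by omega⟩) ^ (n - 1)) ⟨0, by omega⟩ ⟨n - 1, by omega⟩

lemma eval_pPoly (n r : ℕ) (hn : 4 ≤ n) (hr : 4 ≤ r)
    (x : Fin r → Matrix (Fin n) (Fin n) k) :
    MvPolynomial.eval (fun q : Fin r × Fin n × Fin n => x q.1 q.2.1 q.2.2)
        (pPoly k n r hn hr) =
      (Matrix.of fun a b => wrd n r hn hr x a (ps n hn b).1 (ps n hn b).2).det := by
  set ev := MvPolynomial.eval (fun q : Fin r × Fin n × Fin n => x q.1 q.2.1 q.2.2)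
  rw [pPoly, RingHom.map_det]
  congr 1
  rw [RingHom.mapMatrix_apply]
  ext a b
  have h1 : ((Matrix.of fun a b =>
      wrd n r hn hr (genMat k n r) a (ps n hn b).1 (ps n hn b).2).map ev) a b
      = ((wrd n r hn hr (genMat k n r) a).map ev) (ps n hn b).1 (ps n hn b).2 := rfl
  rw [h1, wrd_map]
  congr 1
  funext i
  exact genMat_map n r x i

lemma eval_qPoly (n r : ℕ) (hn : 4 ≤ n) (hr : 4 ≤ r)
    (x : Fin r → Matrix (Fin n) (Fin n) k) :
    MvPolynomial.eval (fun q : Fin r × Fin n × Fin n => x q.1 q.2.1 q.2.2)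
        (qPoly k n r hn hr) =
      ((x ⟨0, by omega⟩) ^ (n - 1)) ⟨0, by omega⟩ ⟨n - 1, by omega⟩ := by
  set ev := MvPolynomial.eval (fun q : Fin r × Fin n × Fin n => x q.1 q.2.1 q.2.2)
  have h1 : ev (qPoly k n r hn hr)
      = (((genMat k n r ⟨0, by omega⟩).map ev) ^ (n - 1)) ⟨0, by omega⟩ ⟨n - 1, by omega⟩ := by
    rw [qPoly]
    have := map_pow (ev.mapMatrix) (genMat k n r ⟨0, by omega⟩) (n - 1)
    simp only [RingHom.mapMatrix_apply] at this
    rw [← this]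
    rfl
  rw [h1, genMat_map]

end NilCommAux
end B

section D
open MvPolynomial Matrix
namespace NilCommAux
variable {k : Type*} [Field k]

/-- single-entry 0/1 matrix -/
def eMat (k : Type*) [Field k] (n : ℕ) (i j : Fin n) : Matrix (Fin n) (Fin n) k :=
  Matrix.of fun a b => if a = i ∧ b = j then 1 else 0

lemma eMat_mul_eMat (n : ℕ) (i j i' j' : Fin n) (h : j ≠ i') :
    eMat k n i j * eMat k n i' j' = 0 := by
  ext a b
  rw [Matrix.mul_apply]
  apply Finset.sum_eq_zero
  intro l _
  simp only [eMat, Matrix.of_apply]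
  split_ifs with h1 h2
  · exact absurd (h1.2.symm.trans h2.1) h
  all_goals ring

lemma shiftMat_mul_eMat (n c : ℕ) (i j : Fin n) (h : ∀ a : Fin n, ¬((a : ℕ) + 1 = (i : ℕ) ∧ (i : ℕ) < c)) :
    shiftMat k n c * eMat k n i j = 0 := by
  ext a b
  rw [Matrix.mul_apply]
  apply Finset.sum_eq_zero
  intro l _
  simp only [eMat, shiftMat, Matrix.of_apply]
  split_ifs with h1 h2
  · exact absurd (h2.1 ▸ h1 : (a : ℕ) + 1 = (i : ℕ) ∧ (i : ℕ) < c) (h a)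
  all_goals ring

lemma eMat_mul_shiftMat (n c : ℕ) (i j : Fin n) (h : ∀ b : Fin n, ¬((j : ℕ) + 1 = (b : ℕ) ∧ (b : ℕ) < c)) :
    eMat k n i j * shiftMat k n c = 0 := by
  ext a b
  rw [Matrix.mul_apply]
  apply Finset.sum_eq_zero
  intro l _
  simp only [eMat, shiftMat, Matrix.of_apply]
  split_ifs with h1 h2
  · exact absurd (h1.2 ▸ h2 : (j : ℕ) + 1 = (b : ℕ) ∧ (b : ℕ) < c) (h b)
  all_goals ring

/-- The witness tuple lying in `U`. -/
def bWit (k : Type*) [Field k] (n r : ℕ) (hn : 4 ≤ n) (hr : 4 ≤ r) :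
    Fin r → Matrix (Fin n) (Fin n) k := fun i =>
  if (i : ℕ) = 0 then shiftMat k n (n - 2)
  else if (i : ℕ) = 1 then eMat k n ⟨n - 2, by omega⟩ ⟨n - 3, by omega⟩
  else if (i : ℕ) = 2 then eMat k n ⟨0, by omega⟩ ⟨n - 1, by omega⟩
  else if (i : ℕ) = 3 then eMat k n ⟨n - 2, by omega⟩ ⟨n - 1, by omega⟩
  else 0

lemma bWit_mul_cross (n r : ℕ) (hn : 4 ≤ n) (hr : 4 ≤ r) (i j : Fin r)
    (hi : (i : ℕ) ≠ 0 ∨ (j : ℕ) ≠ 0) :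
    bWit k n r hn hr i * bWit k n r hn hr j = 0 := by
  unfold bWit
  split_ifs <;>
  first
    | (exfalso; omega)
    | exact zero_mul _
    | exact mul_zero _
    | (apply eMat_mul_eMat; simp only [ne_eq, Fin.mk.injEq]; omega)
    | (apply shiftMat_mul_eMat; intro a; simp only [not_and]; intro h'; omega)
    | (apply eMat_mul_shiftMat; intro b; simp only [not_and]; intro h'; omega)

lemma bWit_mem (n r : ℕ) (hn : 4 ≤ n) (hr : 4 ≤ r) :
    (∀ i, IsNilpotent (bWit k n r hn hr i)) ∧
      ∀ i j, bWit k n r hn hr i * bWit k n r hn hr j = bWit k n r hn hr j * bWit k n r hn hr i := by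
  constructor
  · intro i
    by_cases h0 : (i : ℕ) = 0
    · have : bWit k n r hn hr i = shiftMat k n (n - 2) := by simp [bWit, h0]
      rw [this]; exact shiftMat_isNilpotent n (n - 2) (by omega)
    · exact ⟨2, by rw [pow_two]; exact bWit_mul_cross n r hn hr i i (Or.inl h0)⟩
  · intro i j
    by_cases hij : i = j
    · rw [hij]
    · by_cases hi0 : (i : ℕ) = 0
      · by_cases hj0 : (j : ℕ) = 0
        · exfalso; exact hij (Fin.ext (hi0.trans hj0.symm))
        · rw [bWit_mul_cross n r hn hr i j (Or.inr hj0),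
            bWit_mul_cross n r hn hr j i (Or.inl hj0)]
      · rw [bWit_mul_cross n r hn hr i j (Or.inl hi0),
          bWit_mul_cross n r hn hr j i (Or.inr hi0)]


end NilCommAux
end D

section D2
open MvPolynomial Matrix
namespace NilCommAux
variable {k : Type*} [Field k]

lemma bWit_det (n r : ℕ) (hn : 4 ≤ n) (hr : 4 ≤ r) :
    (Matrix.of fun a b =>
      wrd n r hn hr (bWit k n r hn hr) a (ps n hn b).1 (ps n hn b).2) = 1 := by
  have hb0 : bWit k n r hn hr ⟨0, by omega⟩ = shiftMat k n (n - 2) := by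
    simp [bWit]
  have hb1 : bWit k n r hn hr ⟨1, by omega⟩ = eMat k n ⟨n - 2, by omega⟩ ⟨n - 3, by omega⟩ := by
    simp [bWit]
  have hb2 : bWit k n r hn hr ⟨2, by omega⟩ = eMat k n ⟨0, by omega⟩ ⟨n - 1, by omega⟩ := by
    simp [bWit]
  have hb3 : bWit k n r hn hr ⟨3, by omega⟩ = eMat k n ⟨n - 2, by omega⟩ ⟨n - 1, by omega⟩ := by
    simp [bWit]
  ext a b
  unfold wrd ps
  simp only [Matrix.of_apply]
  rw [hb0, hb1, hb2, hb3, Matrix.one_apply]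
  split_ifs with h1 h2 h3 h4 h5 h6 h7 h8 h9
  all_goals try (rw [shiftMat_pow_apply _ _ _ (by omega)]
                 simp only [Fin.ext_iff, Fin.val_mk]
                 split_ifs <;> first | rfl | (exfalso; omega))
  all_goals try (simp only [eMat, Matrix.of_apply, Fin.ext_iff, Fin.val_mk, Fin.mk.injEq]
                 split_ifs <;> first | rfl | (exfalso; omega))
  all_goals simp [eMat]

end NilCommAux
end D2

section E
open MvPolynomial Matrix Polynomial
namespace NilCommAux
variable {k : Type*} [Field k]

lemma nilpotent_pow_card {n : ℕ} (N : Matrix (Fin n) (Fin n) k) (h : IsNilpotent N) :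
    N ^ n = 0 := by
  rcases Nat.eq_zero_or_pos n with hn0 | hn0
  · subst hn0; ext i j; exact i.elim0
  obtain ⟨m, hm⟩ := h
  have hint : IsIntegral k N := ⟨N.charpoly, N.charpoly_monic, N.aeval_self_charpoly⟩
  have hdvd : minpoly k N ∣ Polynomial.X ^ m :=
    minpoly.dvd k N (by simp [hm])
  obtain ⟨i, hi, hassoc⟩ := (dvd_prime_pow Polynomial.prime_X m).mp hdvd
  have hmin : minpoly k N = Polynomial.X ^ i :=
    Polynomial.eq_of_monic_of_associated (minpoly.monic hint) (Polynomial.monic_X_pow i) hassoc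
  have hNi : N ^ i = 0 := by
    have h2 := minpoly.aeval k N
    rw [hmin] at h2
    simpa using h2
  have hin : i ≤ n := by
    have h1 : (minpoly k N).natDegree ≤ N.charpoly.natDegree :=
      Polynomial.natDegree_le_of_dvd (minpoly.dvd k N N.aeval_self_charpoly)
        N.charpoly_monic.ne_zero
    haveI : Nonempty (Fin n) := ⟨⟨0, hn0⟩⟩
    rw [hmin, Matrix.charpoly_natDegree_eq_dim, Polynomial.natDegree_X_pow,
      Fintype.card_fin] at h1
    exact h1
  calc N ^ n = N ^ i * N ^ (n - i) := by rw [← pow_add]; congr 1; omega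
  _ = 0 := by rw [hNi, zero_mul]

lemma sum_smul_pow_mulVec {n : ℕ} (N : Matrix (Fin n) (Fin n) k) (c : Fin n → k)
    (e : Fin n → ℕ) (w : Fin n → k) :
    (∑ j : Fin n, c j • N ^ (e j)) *ᵥ w = ∑ j : Fin n, c j • ((N ^ (e j)) *ᵥ w) := by
  ext i
  simp only [Matrix.mulVec, dotProduct, Matrix.sum_apply, Matrix.smul_apply,
    smul_eq_mul, Finset.sum_mul, Finset.sum_apply, Pi.smul_apply, Finset.mul_sum, mul_assoc]
  rw [Finset.sum_comm]

/-- Main vanishing lemma: on `C ∩ V` the determinant polynomial `p` vanishes. -/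
lemma key_vanish (n r : ℕ) (hn : 4 ≤ n) (hr : 4 ≤ r)
    (x : Fin r → Matrix (Fin n) (Fin n) k)
    (hnil : ∀ i, IsNilpotent (x i))
    (hcomm : ∀ i j, x i * x j = x j * x i)
    (hq : ((x ⟨0, by omega⟩) ^ (n - 1)) ⟨0, by omega⟩ ⟨n - 1, by omega⟩ ≠ 0) :
    (Matrix.of fun a b => wrd n r hn hr x a (ps n hn b).1 (ps n hn b).2).det = 0 := by
  haveI : Nonempty (Fin n) := ⟨⟨0, by omega⟩⟩
  set N := x ⟨0, by omega⟩ with hN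
  have hNn : N ^ n = 0 := nilpotent_pow_card N (hnil _)
  set v : Fin n → k := Pi.single ⟨n - 1, by omega⟩ 1 with hv
  have hvN : (N ^ (n - 1)) *ᵥ v ≠ 0 := by
    intro hc
    apply hq
    have h0 := congrFun hc ⟨0, by omega⟩
    rw [hv, Matrix.mulVec_single] at h0
    simpa using h0
  -- linear independence of the Krylov family
  have li : LinearIndependent k (fun j : Fin n => (N ^ (j : ℕ)) *ᵥ v) := by
    rw [Fintype.linearIndependent_iff]
    intro c hc
    have H : ∀ t : ℕ, ∀ ht : t < n, c ⟨t, ht⟩ = 0 := by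
      intro t
      induction t using Nat.strong_induction_on with
      | _ t IH =>
        intro ht
        have hc' : (∑ j : Fin n, c j • N ^ (j : ℕ)) *ᵥ v = 0 := by
          rw [sum_smul_pow_mulVec]; exact hc
        have h4 : (∑ j : Fin n, c j • N ^ ((n - 1 - t) + (j : ℕ))) *ᵥ v = 0 := by
          have h5 : (∑ j : Fin n, c j • N ^ ((n - 1 - t) + (j : ℕ)))
              = N ^ (n - 1 - t) * ∑ j : Fin n, c j • N ^ (j : ℕ) := by
            rw [Finset.mul_sum]
            apply Finset.sum_congr rfl
            intro j _
            rw [mul_smul_comm, ← pow_add]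
          rw [h5, ← Matrix.mulVec_mulVec, hc', Matrix.mulVec_zero]
        have h6 : (∑ j : Fin n, c j • N ^ ((n - 1 - t) + (j : ℕ)))
            = c ⟨t, ht⟩ • N ^ (n - 1) := by
          rw [Finset.sum_eq_single (⟨t, ht⟩ : Fin n)]
          · congr 2
            simp only [Fin.val_mk]
            omega
          · intro j _ hj
            rcases Nat.lt_or_ge (j : ℕ) t with hlt | hge
            · have : c j = 0 := by
                have h7 := IH (j : ℕ) hlt j.isLt
                simpa [Fin.eta] using h7
              rw [this, zero_smul]
            · have hgt : t < (j : ℕ) := by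
                rcases Nat.eq_or_lt_of_le hge with he | hl
                · exact absurd (Fin.ext he.symm : j = ⟨t, ht⟩) hj
                · exact hl
              have h8 : N ^ ((n - 1 - t) + (j : ℕ)) = 0 := by
                calc N ^ ((n - 1 - t) + (j : ℕ))
                    = N ^ n * N ^ ((n - 1 - t) + (j : ℕ) - n) := by
                      rw [← pow_add]; congr 1; omega
                  _ = 0 := by rw [hNn, zero_mul]
              rw [h8, smul_zero]
          · intro hmem; exact absurd (Finset.mem_univ _) hmem
        rw [h6, Matrix.smul_mulVec] at h4
        rcases smul_eq_zero.mp h4 with h9 | h9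
        · exact h9
        · exact absurd h9 hvN
    intro j
    have := H (j : ℕ) j.isLt
    simpa [Fin.eta] using this
  -- basis from the Krylov family
  let β : Module.Basis (Fin n) k (Fin n → k) :=
    basisOfLinearIndependentOfCardEqFinrank li (by simp [Module.finrank_fin_fun])
  have hβ : ∀ j : Fin n, β j = (N ^ (j : ℕ)) *ᵥ v := fun j => by
    simp [β, coe_basisOfLinearIndependentOfCardEqFinrank]
  -- every nilpotent matrix commuting with N is in span of N, N², …
  have hcomm2 : ∀ y : Matrix (Fin n) (Fin n) k, y * N = N * y → IsNilpotent y →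
      ∃ d : Fin n → k, d ⟨0, by omega⟩ = 0 ∧ y = ∑ j : Fin n, d j • N ^ (j : ℕ) := by
    intro y hyN hynil
    have hyc : Commute y N := hyN
    set d : Fin n → k := fun j => β.repr (y *ᵥ v) j with hd
    have hrepr : ∑ j : Fin n, d j • ((N ^ (j : ℕ)) *ᵥ v) = y *ᵥ v := by
      have hs := β.sum_repr (y *ᵥ v)
      calc ∑ j : Fin n, d j • ((N ^ (j : ℕ)) *ᵥ v)
          = ∑ j : Fin n, β.repr (y *ᵥ v) j • β j := by
            apply Finset.sum_congr rfl; intro j _; rw [hβ j]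
        _ = y *ᵥ v := hs
    have hy : y = ∑ j : Fin n, d j • N ^ (j : ℕ) := by
      have hP : Commute N (∑ j : Fin n, d j • N ^ (j : ℕ)) :=
        Commute.sum_right _ _ _ fun j _ => ((Commute.refl N).pow_right _).smul_right _
      have h6 : Matrix.toLin' y = Matrix.toLin' (∑ j : Fin n, d j • N ^ (j : ℕ)) := by
        apply β.ext
        intro j
        rw [hβ j]
        rw [Matrix.toLin'_apply, Matrix.toLin'_apply]
        calc y *ᵥ ((N ^ (j : ℕ)) *ᵥ v)
            = (y * N ^ (j : ℕ)) *ᵥ v := by rw [Matrix.mulVec_mulVec]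
          _ = (N ^ (j : ℕ) * y) *ᵥ v := by rw [(hyc.pow_right (j : ℕ)).eq]
          _ = (N ^ (j : ℕ)) *ᵥ (y *ᵥ v) := by rw [Matrix.mulVec_mulVec]
          _ = (N ^ (j : ℕ)) *ᵥ ((∑ j' : Fin n, d j' • N ^ (j' : ℕ)) *ᵥ v) := by
              rw [sum_smul_pow_mulVec, hrepr]
          _ = (N ^ (j : ℕ) * ∑ j' : Fin n, d j' • N ^ (j' : ℕ)) *ᵥ v := by
              rw [Matrix.mulVec_mulVec]
          _ = ((∑ j' : Fin n, d j' • N ^ (j' : ℕ)) * N ^ (j : ℕ)) *ᵥ v := by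
              rw [(hP.pow_left (j : ℕ)).eq]
          _ = (∑ j' : Fin n, d j' • N ^ (j' : ℕ)) *ᵥ ((N ^ (j : ℕ)) *ᵥ v) := by
              rw [Matrix.mulVec_mulVec]
      exact Matrix.toLin'.injective h6
    refine ⟨d, ?_, hy⟩
    -- show d 0 = 0 using nilpotency
    set R : Matrix (Fin n) (Fin n) k :=
      ∑ j ∈ Finset.univ.erase (⟨0, by omega⟩ : Fin n), d j • N ^ (j : ℕ) with hR
    have hsplit : y = R + d ⟨0, by omega⟩ • (1 : Matrix (Fin n) (Fin n) k) := by
      have e0 : ((⟨0, by omega⟩ : Fin n) : ℕ) = 0 := rfl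
      rw [hy, ← Finset.sum_erase_add Finset.univ _ (Finset.mem_univ (⟨0, by omega⟩ : Fin n)),
        e0, pow_zero, ← hR]
    have hRnil : IsNilpotent R := by
      have hfac : R = N * ∑ j ∈ Finset.univ.erase (⟨0, by omega⟩ : Fin n),
          d j • N ^ ((j : ℕ) - 1) := by
        rw [hR, Finset.mul_sum]
        apply Finset.sum_congr rfl
        intro j hj
        have hj0 : (j : ℕ) ≠ 0 := by
          intro h0
          exact (Finset.mem_erase.mp hj).1 (Fin.ext h0)
        rw [mul_smul_comm]
        congr 1
        rw [← pow_succ']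
        congr 1
        omega
      refine ⟨n, ?_⟩
      have hcomm3 : Commute N (∑ j ∈ Finset.univ.erase (⟨0, by omega⟩ : Fin n),
          d j • N ^ ((j : ℕ) - 1)) :=
        Commute.sum_right _ _ _ fun j _ => ((Commute.refl N).pow_right _).smul_right _
      rw [hfac, hcomm3.mul_pow, hNn, zero_mul]
    have hynR : Commute y R := by
      have : Commute (R + d ⟨0, by omega⟩ • (1 : Matrix (Fin n) (Fin n) k)) R :=
        Commute.add_left (Commute.refl R) (((Commute.one_left R).smul_left _))
      rwa [← hsplit] at this
    have hdnil : IsNilpotent (d ⟨0, by omega⟩ • (1 : Matrix (Fin n) (Fin n) k)) := by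
      have h8 : d ⟨0, by omega⟩ • (1 : Matrix (Fin n) (Fin n) k) = y - R := by
        rw [hsplit]; abel
      rw [h8]
      exact Commute.isNilpotent_sub hynR hynil hRnil
    obtain ⟨m, hm⟩ := hdnil
    rcases Nat.eq_zero_or_pos m with hm0 | hm0
    · exfalso
      rw [hm0, pow_zero] at hm
      have := congrFun (congrFun hm ⟨0, by omega⟩) ⟨0, by omega⟩
      simp [Matrix.one_apply_eq] at this
    · have h9 : (d ⟨0, by omega⟩) ^ m • (1 : Matrix (Fin n) (Fin n) k) = 0 := by
        rw [_root_.smul_pow, one_pow] at hm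
        exact hm
      have h10 := congrFun (congrFun h9 ⟨0, by omega⟩) ⟨0, by omega⟩
      rw [Matrix.smul_apply, Matrix.one_apply_eq, Matrix.zero_apply, smul_eq_mul, mul_one] at h10
      exact pow_eq_zero_iff (by omega) |>.mp h10
  -- coefficients for all words
  have hall : ∀ a : Fin n, ∃ d : Fin n → k, d ⟨0, by omega⟩ = 0 ∧
      wrd n r hn hr x a = ∑ j : Fin n, d j • N ^ (j : ℕ) := by
    intro a
    unfold wrd
    split_ifs with h1 h2 h3
    · have hlt : (a : ℕ) + 1 < n := by omega
      refine ⟨Pi.single (⟨(a : ℕ) + 1, hlt⟩ : Fin n) 1, ?_, ?_⟩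
      · apply Pi.single_eq_of_ne
        simp [Fin.ext_iff]
      · symm
        rw [Finset.sum_eq_single (⟨(a : ℕ) + 1, hlt⟩ : Fin n)]
        · simp; rfl
        · intro j _ hj
          rw [Pi.single_eq_of_ne hj, zero_smul]
        · intro hmem; exact absurd (Finset.mem_univ _) hmem
    · exact hcomm2 _ (hcomm _ _) (hnil _)
    · exact hcomm2 _ (hcomm _ _) (hnil _)
    · exact hcomm2 _ (hcomm _ _) (hnil _)
  choose D hD0 hDei using hall
  have hfac : (Matrix.of fun a b => wrd n r hn hr x a (ps n hn b).1 (ps n hn b).2)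
      = (Matrix.of fun (a j : Fin n) => D a j) *
        (Matrix.of fun (j b : Fin n) => (N ^ (j : ℕ)) (ps n hn b).1 (ps n hn b).2) := by
    ext a b
    rw [Matrix.mul_apply]
    simp only [Matrix.of_apply]
    rw [hDei a, Matrix.sum_apply]
    apply Finset.sum_congr rfl
    intro j _
    rw [Matrix.smul_apply, smul_eq_mul]
  rw [hfac, Matrix.det_mul]
  have hzero : (Matrix.of fun (a j : Fin n) => D a j).det = 0 :=
    Matrix.det_eq_zero_of_column_eq_zero ⟨0, by omega⟩ (fun a => hD0 a)
  rw [hzero, zero_mul]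

end NilCommAux
end E


section F
open MvPolynomial Matrix TopologicalSpace
namespace NilCommAux
variable {k : Type*} [Field k]

/-- The witness tuple lying in `V`: all components the regular nilpotent Jordan block. -/
def aWit (k : Type*) [Field k] (n r : ℕ) : Fin r → Matrix (Fin n) (Fin n) k :=
  fun _ => shiftMat k n n

lemma aWit_mem (n r : ℕ) (hn : 4 ≤ n) (hr : 4 ≤ r) :
    aWit k n r ∈ nilCommTuples k n r :=
  ⟨fun _ => shiftMat_isNilpotent n n (by omega), fun _ _ => rfl⟩

lemma aWit_eval (n r : ℕ) (hn : 4 ≤ n) (hr : 4 ≤ r) :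
    MvPolynomial.eval (fun q : Fin r × Fin n × Fin n =>
      aWit k n r q.1 q.2.1 q.2.2) (qPoly k n r hn hr) ≠ 0 := by
  rw [eval_qPoly]
  show ((shiftMat k n n) ^ (n - 1)) ⟨0, by omega⟩ ⟨n - 1, by omega⟩ ≠ 0
  rw [shiftMat_pow_apply _ _ _ (by omega), if_pos]
  · exact one_ne_zero
  · refine ⟨?_, ?_⟩ <;> simp only [Fin.val_mk] <;> omega

lemma bWit_mem' (n r : ℕ) (hn : 4 ≤ n) (hr : 4 ≤ r) :
    bWit k n r hn hr ∈ nilCommTuples k n r :=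
  ⟨(NilCommAux.bWit_mem n r hn hr).1, (NilCommAux.bWit_mem n r hn hr).2⟩

lemma bWit_eval (n r : ℕ) (hn : 4 ≤ n) (hr : 4 ≤ r) :
    MvPolynomial.eval (fun q : Fin r × Fin n × Fin n =>
      bWit k n r hn hr q.1 q.2.1 q.2.2) (pPoly k n r hn hr) ≠ 0 := by
  rw [eval_pPoly, bWit_det, Matrix.det_one]
  exact one_ne_zero

end NilCommAux
end F

theorem nilCommTuples_not_irreducible' (k : Type*) [Field k]
    (n r : ℕ) (hn : 4 ≤ n) (hr : 4 ≤ r) :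
    letI := matTupleZariski k n r
    ¬ IsIrreducible (nilCommTuples k n r) := by
  letI := matTupleZariski k n r
  intro hirr
  obtain ⟨hne, hpre⟩ := hirr
  have hUopen : IsOpen {x : Fin r → Matrix (Fin n) (Fin n) k |
      MvPolynomial.eval (fun q : Fin r × Fin n × Fin n => x q.1 q.2.1 q.2.2)
        (NilCommAux.pPoly k n r hn hr) ≠ 0} :=
    TopologicalSpace.isOpen_generateFrom_of_mem ⟨NilCommAux.pPoly k n r hn hr, rfl⟩
  have hVopen : IsOpen {x : Fin r → Matrix (Fin n) (Fin n) k |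
      MvPolynomial.eval (fun q : Fin r × Fin n × Fin n => x q.1 q.2.1 q.2.2)
        (NilCommAux.qPoly k n r hn hr) ≠ 0} :=
    TopologicalSpace.isOpen_generateFrom_of_mem ⟨NilCommAux.qPoly k n r hn hr, rfl⟩
  have hbne : (nilCommTuples k n r ∩ {x : Fin r → Matrix (Fin n) (Fin n) k |
      MvPolynomial.eval (fun q : Fin r × Fin n × Fin n => x q.1 q.2.1 q.2.2)
        (NilCommAux.pPoly k n r hn hr) ≠ 0}).Nonempty :=
    ⟨NilCommAux.bWit k n r hn hr, NilCommAux.bWit_mem' n r hn hr,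
      NilCommAux.bWit_eval n r hn hr⟩
  have hane : (nilCommTuples k n r ∩ {x : Fin r → Matrix (Fin n) (Fin n) k |
      MvPolynomial.eval (fun q : Fin r × Fin n × Fin n => x q.1 q.2.1 q.2.2)
        (NilCommAux.qPoly k n r hn hr) ≠ 0}).Nonempty :=
    ⟨NilCommAux.aWit k n r, NilCommAux.aWit_mem n r hn hr,
      NilCommAux.aWit_eval n r hn hr⟩
  obtain ⟨z, hzS, hzU, hzV⟩ := hpre _ _ hUopen hVopen hbne hane
  apply hzU
  have hz2 : ((z ⟨0, by omega⟩) ^ (n - 1)) ⟨0, by omega⟩ ⟨n - 1, by omega⟩ ≠ 0 := by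
    have := hzV
    rwa [Set.mem_setOf_eq, NilCommAux.eval_qPoly] at this
  show MvPolynomial.eval (fun q : Fin r × Fin n × Fin n => z q.1 q.2.1 q.2.2)
    (NilCommAux.pPoly k n r hn hr) = 0
  rw [NilCommAux.eval_pPoly]
  exact NilCommAux.key_vanish n r hn hr z hzS.1 hzS.2 hz2


/-- For all integers `n ≥ 4` and `r ≥ 4`, the variety `C_r(N_n)` is reducible, i.e. not
irreducible, in the Zariski topology. -/
theorem nilCommTuples_not_irreducible (k : Type*) [Field k] [IsAlgClosed k]
    (n r : ℕ) (hn : 4 ≤ n) (hr : 4 ≤ r) :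
    letI := matTupleZariski k n r
    ¬ IsIrreducible (nilCommTuples k n r) :=
  nilCommTuples_not_irreducible' k n r hn hr
end

section
/- For all integers n, r ≥ 2, dim C_r(N_n) ≥ (r+1)·⌊n²/4⌋. -/
open MvPolynomial Matrix TopologicalSpace

namespace NilCommDimAux

/-! ### Index bookkeeping -/

/-- Index of an "E"-coordinate (the conjugating matrix entries). -/
def cIdx (p row col : ℕ) : ℕ := row * p + col

/-- Index of a "B"-coordinate. -/
def bIdx (p q i a c : ℕ) : ℕ := q * p + i * (p * q) + (a * q + c)

lemma add_lt_mul {a b c d : ℕ} (h1 : a < c) (h2 : b < d) : a * d + b < c * d := by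
  calc a * d + b < a * d + d := Nat.add_lt_add_left h2 _
  _ = (a + 1) * d := by ring
  _ ≤ c * d := Nat.mul_le_mul_right d h1

lemma bIdx_ge (p q i a c : ℕ) : q * p ≤ bIdx p q i a c :=
  le_trans (Nat.le_add_right _ _) (Nat.le_add_right _ _)

section Defs

variable (k : Type*) [Field k]

/-! ### The matrices over `k` -/

/-- The "conjugating" nilpotent matrix with entries in the (high, low) block. -/
def EkM (n p : ℕ) (w : ℕ → k) : Matrix (Fin n) (Fin n) k :=
  Matrix.of fun a b =>
    if p ≤ a.val ∧ b.val < p then w (cIdx p (a.val - p) b.val) else 0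

/-- The "generic" nilpotent matrix with entries in the (low, high) block; for `i = 0` it is
shifted by a full-rank pattern. -/
def NkM (n p q i : ℕ) (w : ℕ → k) : Matrix (Fin n) (Fin n) k :=
  Matrix.of fun a b =>
    if a.val < p ∧ p ≤ b.val then
      w (bIdx p q i a.val (b.val - p)) +
        (if i = 0 ∧ b.val = a.val + p then 1 else 0)
    else 0

/-- The conjugated matrix. -/
def PsiM (n p q i : ℕ) (w : ℕ → k) : Matrix (Fin n) (Fin n) k :=
  (1 + EkM k n p w) * NkM k n p q i w * (1 - EkM k n p w)

/-- The tuple of conjugated matrices. -/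
def Psi (n p q r : ℕ) (w : ℕ → k) : Fin r → Matrix (Fin n) (Fin n) k :=
  fun i => PsiM k n p q i.val w

/-! ### Polynomial versions -/

noncomputable def EkP (n p : ℕ) : Matrix (Fin n) (Fin n) (MvPolynomial ℕ k) :=
  Matrix.of fun a b =>
    if p ≤ a.val ∧ b.val < p then X (cIdx p (a.val - p) b.val) else 0

noncomputable def NkP (n p q i : ℕ) : Matrix (Fin n) (Fin n) (MvPolynomial ℕ k) :=
  Matrix.of fun a b =>
    if a.val < p ∧ p ≤ b.val then
      X (bIdx p q i a.val (b.val - p)) +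
        C (if i = 0 ∧ b.val = a.val + p then (1 : k) else 0)
    else 0

noncomputable def PsiP (n p q i : ℕ) : Matrix (Fin n) (Fin n) (MvPolynomial ℕ k) :=
  (1 + EkP k n p) * NkP k n p q i * (1 - EkP k n p)

noncomputable def PhiP (n p q r : ℕ) : (Fin r × Fin n × Fin n) → MvPolynomial ℕ k :=
  fun t => PsiP k n p q t.1.val t.2.1 t.2.2

/-! ### Entry lemmas -/

lemma EkM_apply (n p : ℕ) (w : ℕ → k) (a b : Fin n) :
    EkM k n p w a b = if p ≤ a.val ∧ b.val < p then w (cIdx p (a.val - p) b.val) else 0 := rfl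

lemma NkM_apply (n p q i : ℕ) (w : ℕ → k) (a b : Fin n) :
    NkM k n p q i w a b =
      if a.val < p ∧ p ≤ b.val then
        w (bIdx p q i a.val (b.val - p)) + (if i = 0 ∧ b.val = a.val + p then 1 else 0)
      else 0 := rfl

lemma EkM_zero_row {n p : ℕ} (w : ℕ → k) {a : Fin n} (ha : a.val < p) (b : Fin n) :
    EkM k n p w a b = 0 := by
  rw [EkM_apply, if_neg (by omega)]

lemma EkM_zero_col {n p : ℕ} (w : ℕ → k) (a : Fin n) {b : Fin n} (hb : p ≤ b.val) :
    EkM k n p w a b = 0 := by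
  rw [EkM_apply, if_neg (by omega)]

lemma NkM_zero_row {n p q i : ℕ} (w : ℕ → k) {a : Fin n} (ha : p ≤ a.val) (b : Fin n) :
    NkM k n p q i w a b = 0 := by
  rw [NkM_apply, if_neg (by omega)]

lemma NkM_zero_col {n p q i : ℕ} (w : ℕ → k) (a : Fin n) {b : Fin n} (hb : b.val < p) :
    NkM k n p q i w a b = 0 := by
  rw [NkM_apply, if_neg (by omega)]

lemma map_EkP (n p : ℕ) (w : ℕ → k) : (EkP k n p).map (eval w) = EkM k n p w := by
  ext a b
  simp only [EkP, EkM, Matrix.map_apply, Matrix.of_apply, apply_ite (eval w), eval_X, map_zero]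

lemma map_NkP (n p q i : ℕ) (w : ℕ → k) : (NkP k n p q i).map (eval w) = NkM k n p q i w := by
  ext a b
  simp only [NkP, NkM, Matrix.map_apply, Matrix.of_apply, apply_ite (eval w), map_add, eval_X,
    eval_C, map_zero]

lemma map_PsiP (n p q i : ℕ) (w : ℕ → k) : (PsiP k n p q i).map (eval w) = PsiM k n p q i w := by
  have h : (PsiP k n p q i).map (eval w) = (eval w).mapMatrix (PsiP k n p q i) := rfl
  rw [h, PsiP, _root_.map_mul, _root_.map_mul, _root_.map_add, _root_.map_one, _root_.map_sub,
    _root_.map_one, RingHom.mapMatrix_apply, RingHom.mapMatrix_apply, map_EkP, map_NkP, PsiM]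

lemma eval_PhiP (n p q r : ℕ) (w : ℕ → k) (t : Fin r × Fin n × Fin n) :
    eval w (PhiP k n p q r t) = Psi k n p q r w t.1 t.2.1 t.2.2 := by
  have h : eval w (PhiP k n p q r t) = ((PsiP k n p q t.1.val).map (eval w)) t.2.1 t.2.2 := rfl
  rw [h, map_PsiP]; rfl

/-! ### Support lemmas -/

lemma EkM_mul_apply {n p : ℕ} (w : ℕ → k) (M : Matrix (Fin n) (Fin n) k) {a : Fin n}
    (ha : a.val < p) (b : Fin n) : (EkM k n p w * M) a b = 0 := by
  rw [Matrix.mul_apply]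
  apply Finset.sum_eq_zero
  intro c _
  rw [EkM_zero_row k w ha, zero_mul]

lemma mul_EkM_apply {n p : ℕ} (w : ℕ → k) (M : Matrix (Fin n) (Fin n) k) (a : Fin n) {b : Fin n}
    (hb : p ≤ b.val) : (M * EkM k n p w) a b = 0 := by
  rw [Matrix.mul_apply]
  apply Finset.sum_eq_zero
  intro c _
  rw [EkM_zero_col k w c hb, mul_zero]

lemma EkM_mul_EkM (n p : ℕ) (w : ℕ → k) : EkM k n p w * EkM k n p w = 0 := by
  ext a b
  rw [Matrix.mul_apply, Matrix.zero_apply]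
  apply Finset.sum_eq_zero
  intro c _
  by_cases hc : c.val < p
  · rw [EkM_zero_row k w hc b, mul_zero]
  · rw [EkM_zero_col k w a (by omega), zero_mul]

lemma NkM_mul_NkM (n p q i j : ℕ) (w : ℕ → k) : NkM k n p q i w * NkM k n p q j w = 0 := by
  ext a b
  rw [Matrix.mul_apply, Matrix.zero_apply]
  apply Finset.sum_eq_zero
  intro c _
  by_cases hc : c.val < p
  · rw [NkM_zero_col k w a hc, zero_mul]
  · rw [NkM_zero_row k w (by omega) b, mul_zero]

lemma PsiM_mul (n p q i j : ℕ) (w : ℕ → k) :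
    PsiM k n p q i w * PsiM k n p q j w = 0 := by
  have key : (1 - EkM k n p w) * (1 + EkM k n p w) = 1 := by
    have h : (1 - EkM k n p w) * (1 + EkM k n p w) = 1 - EkM k n p w * EkM k n p w := by
      noncomm_ring
    rw [h, EkM_mul_EkM, sub_zero]
  have expand : PsiM k n p q i w * PsiM k n p q j w
      = (1 + EkM k n p w) *
          ((NkM k n p q i w * ((1 - EkM k n p w) * (1 + EkM k n p w))) * NkM k n p q j w) *
          (1 - EkM k n p w) := by
    rw [PsiM, PsiM]; noncomm_ring
  rw [expand, key, mul_one, NkM_mul_NkM, mul_zero, zero_mul]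

lemma Psi_mem (n p q r : ℕ) (w : ℕ → k) : Psi k n p q r w ∈ nilCommTuples k n r := by
  constructor
  · exact fun i => ⟨2, by rw [pow_two]; exact PsiM_mul k n p q _ _ w⟩
  · intro i j
    show PsiM k n p q i.val w * PsiM k n p q j.val w
        = PsiM k n p q j.val w * PsiM k n p q i.val w
    rw [PsiM_mul, PsiM_mul]

/-! ### Entry computations -/

lemma PsiM_expand (n p q i : ℕ) (w : ℕ → k) :
    PsiM k n p q i w =
      NkM k n p q i w + EkM k n p w * NkM k n p q i w - NkM k n p q i w * EkM k n p w
        - EkM k n p w * (NkM k n p q i w * EkM k n p w) := by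
  rw [PsiM]; noncomm_ring

lemma PsiM_lo_lo {n p : ℕ} (q i : ℕ) (w : ℕ → k) {a b : Fin n}
    (ha : a.val < p) (hb : b.val < p) :
    PsiM k n p q i w a b = -(NkM k n p q i w * EkM k n p w) a b := by
  rw [PsiM_expand]
  simp only [Matrix.add_apply, Matrix.sub_apply]
  rw [EkM_mul_apply k w _ ha, EkM_mul_apply k w _ ha, NkM_zero_col k w a hb]
  ring

lemma PsiM_lo_hi {n p : ℕ} (q i : ℕ) (w : ℕ → k) {a b : Fin n}
    (ha : a.val < p) (hb : p ≤ b.val) :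
    PsiM k n p q i w a b = NkM k n p q i w a b := by
  rw [PsiM_expand]
  simp only [Matrix.add_apply, Matrix.sub_apply]
  rw [EkM_mul_apply k w _ ha, EkM_mul_apply k w _ ha, mul_EkM_apply k w _ _ hb]
  ring

lemma NE_entry {n p q : ℕ} (w : ℕ → k) {a b : Fin n}
    (ha : a.val < q) (hqp : q ≤ p) (hpq : p + q = n) (hb : b.val < p)
    (hw : ∀ c', w (bIdx p q 0 a.val c') = 0) :
    (NkM k n p q 0 w * EkM k n p w) a b = w (cIdx p a.val b.val) := by
  have hap : a.val + p < n := by omega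
  rw [Matrix.mul_apply]
  rw [Finset.sum_eq_single (⟨a.val + p, hap⟩ : Fin n)]
  · rw [NkM_apply, EkM_apply,
      if_pos (⟨by omega, Nat.le_add_left p a.val⟩ :
        a.val < p ∧ p ≤ ((⟨a.val + p, hap⟩ : Fin n) : ℕ)),
      if_pos (⟨Nat.le_add_left p a.val, hb⟩ :
        p ≤ ((⟨a.val + p, hap⟩ : Fin n) : ℕ) ∧ b.val < p),
      show ((⟨a.val + p, hap⟩ : Fin n) : ℕ) = a.val + p from rfl,
      Nat.add_sub_cancel, hw, if_pos ⟨rfl, rfl⟩, zero_add, one_mul]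
  · intro c _ hc
    by_cases h1 : c.val < p
    · rw [NkM_zero_col k w a h1, zero_mul]
    · have hcv : c.val ≠ a.val + p := fun h => hc (Fin.ext h)
      rw [NkM_apply, if_pos (by omega), hw (c.val - p),
        if_neg (by omega : ¬ ((0 : ℕ) = 0 ∧ c.val = a.val + p)), add_zero, zero_mul]
  · intro h
    exact absurd (Finset.mem_univ _) h

end Defs

/-! ### Generic topology / polynomial lemmas -/

lemma exists_eval_ne_zero {k : Type*} [Field k] [Infinite k] {σ : Type*}
    {p : MvPolynomial σ k} (hp : p ≠ 0) : ∃ x : σ → k, eval x p ≠ 0 := by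
  by_contra h
  push_neg at h
  exact hp (MvPolynomial.funext fun x => by rw [h x, map_zero])

lemma exists_basic {k : Type*} [Field k] {n r : ℕ}
    {O : Set (Fin r → Matrix (Fin n) (Fin n) k)}
    (hO : TopologicalSpace.GenerateOpen
      {U | ∃ p : MvPolynomial (Fin r × Fin n × Fin n) k,
        U = {x | eval (fun q => x q.1 q.2.1 q.2.2) p ≠ 0}} O) :
    ∀ x ∈ O, ∃ p : MvPolynomial (Fin r × Fin n × Fin n) k,
      eval (fun q => x q.1 q.2.1 q.2.2) p ≠ 0 ∧
      {y | eval (fun q => y q.1 q.2.1 q.2.2) p ≠ 0} ⊆ O := by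
  induction hO with
  | basic s hs =>
      obtain ⟨p, rfl⟩ := hs
      exact fun x hx => ⟨p, hx, subset_rfl⟩
  | univ =>
      exact fun x _ => ⟨1, by simp, fun y _ => trivial⟩
  | inter s t _ _ ihs iht =>
      intro x hx
      obtain ⟨p, hp1, hp2⟩ := ihs x hx.1
      obtain ⟨p', hq1, hq2⟩ := iht x hx.2
      refine ⟨p * p', by rw [_root_.map_mul]; exact mul_ne_zero hp1 hq1, fun y hy => ?_⟩
      rw [Set.mem_setOf_eq, _root_.map_mul] at hy
      exact ⟨hp2 (left_ne_zero_of_mul hy), hq2 (right_ne_zero_of_mul hy)⟩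
  | sUnion S hS ih =>
      rintro x ⟨s, hsS, hxs⟩
      obtain ⟨p, h1, h2⟩ := ih s hsS x hxs
      exact ⟨p, h1, h2.trans (Set.subset_sUnion_of_mem hsS)⟩

lemma eval_bind₁' {k : Type*} [Field k] {σ τ : Type*} (v : τ → k)
    (f : σ → MvPolynomial τ k) (P : MvPolynomial σ k) :
    eval v (bind₁ f P) = eval (fun i => eval v (f i)) P :=
  eval₂Hom_bind₁ _ _ _ _


/-! ### Truncation and the parametrized subsets -/

def trunc {k : Type*} [Field k] (l : ℕ) (v : ℕ → k) : ℕ → k := fun t => if t < l then v t else 0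

lemma trunc_apply {k : Type*} [Field k] (l : ℕ) (v : ℕ → k) (t : ℕ) :
    trunc l v t = if t < l then v t else 0 := rfl

lemma trunc_idem {k : Type*} [Field k] {l l' : ℕ} (h : l ≤ l') (v : ℕ → k) :
    trunc l' (trunc l v) = trunc l v := by
  funext t
  simp only [trunc]
  split_ifs <;> first | rfl | omega

/-- The parametrized subset: image of the first `l` parameters. -/
def Sset (k : Type*) [Field k] (n p q r l : ℕ) : Set (Fin r → Matrix (Fin n) (Fin n) k) :=
  Set.range fun v : ℕ → k => Psi k n p q r (trunc l v)

lemma Sset_mono (k : Type*) [Field k] (n p q r : ℕ) {l l' : ℕ} (h : l ≤ l') :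
    Sset k n p q r l ⊆ Sset k n p q r l' := by
  rintro _ ⟨v, rfl⟩
  refine ⟨trunc l v, ?_⟩
  show Psi k n p q r (trunc l' (trunc l v)) = Psi k n p q r (trunc l v)
  rw [trunc_idem h]

lemma Sset_sub (k : Type*) [Field k] (n p q r l : ℕ) :
    Sset k n p q r l ⊆ nilCommTuples k n r := by
  rintro _ ⟨v, rfl⟩
  exact Psi_mem k n p q r _

lemma eval_S {k : Type*} [Field k] (n p q r l : ℕ) (v : ℕ → k)
    (P : MvPolynomial (Fin r × Fin n × Fin n) k) :
    eval v (bind₁ (fun t : ℕ => if t < l then (X t : MvPolynomial ℕ k) else 0)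
        (bind₁ (PhiP k n p q r) P))
      = eval (fun t => Psi k n p q r (trunc l v) t.1 t.2.1 t.2.2) P := by
  rw [eval_bind₁', eval_bind₁']
  have hw : (fun i : ℕ => eval v ((fun t : ℕ =>
      if t < l then (X t : MvPolynomial ℕ k) else 0) i)) = trunc l v := by
    funext i
    simp only
    rw [apply_ite (eval v), eval_X, map_zero, trunc_apply]
  rw [hw]
  have h2 : (fun i : Fin r × Fin n × Fin n => eval (trunc l v) (PhiP k n p q r i))
      = fun t : Fin r × Fin n × Fin n => Psi k n p q r (trunc l v) t.1 t.2.1 t.2.2 :=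
    funext fun t => eval_PhiP k n p q r (trunc l v) t
  rw [h2]

set_option maxHeartbeats 2000000 in
/-- Any two basic opens meeting `Sset` meet simultaneously on `Sset`. -/
lemma S_preirr {k : Type*} [Field k] [Infinite k] (n p q r l : ℕ)
    {O₁ O₂ : Set (Fin r → Matrix (Fin n) (Fin n) k)}
    (h₁ : TopologicalSpace.GenerateOpen
      {U | ∃ P : MvPolynomial (Fin r × Fin n × Fin n) k,
        U = {x | eval (fun t => x t.1 t.2.1 t.2.2) P ≠ 0}} O₁)
    (h₂ : TopologicalSpace.GenerateOpen
      {U | ∃ P : MvPolynomial (Fin r × Fin n × Fin n) k,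
        U = {x | eval (fun t => x t.1 t.2.1 t.2.2) P ≠ 0}} O₂)
    (m₁ : (Sset k n p q r l ∩ O₁).Nonempty) (m₂ : (Sset k n p q r l ∩ O₂).Nonempty) :
    (Sset k n p q r l ∩ (O₁ ∩ O₂)).Nonempty := by
  obtain ⟨x₁, hx₁S, hx₁⟩ := m₁
  obtain ⟨x₂, hx₂S, hx₂⟩ := m₂
  obtain ⟨P, hP1, hP2⟩ := exists_basic h₁ _ hx₁
  obtain ⟨Q, hQ1, hQ2⟩ := exists_basic h₂ _ hx₂
  obtain ⟨v₁, hv₁⟩ := hx₁S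
  obtain ⟨v₂, hv₂⟩ := hx₂S
  have hv₁' : Psi k n p q r (trunc l v₁) = x₁ := hv₁
  have hv₂' : Psi k n p q r (trunc l v₂) = x₂ := hv₂
  rw [← hv₁'] at hP1
  rw [← hv₂'] at hQ1
  have hR1 : bind₁ (fun t : ℕ => if t < l then (X t : MvPolynomial ℕ k) else 0)
      (bind₁ (PhiP k n p q r) P) ≠ 0 := by
    intro h0
    rw [← eval_S n p q r l v₁ P, h0, map_zero] at hP1
    exact hP1 rfl
  have hR2 : bind₁ (fun t : ℕ => if t < l then (X t : MvPolynomial ℕ k) else 0)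
      (bind₁ (PhiP k n p q r) Q) ≠ 0 := by
    intro h0
    rw [← eval_S n p q r l v₂ Q, h0, map_zero] at hQ1
    exact hQ1 rfl
  obtain ⟨w, hw⟩ := exists_eval_ne_zero (mul_ne_zero hR1 hR2)
  rw [_root_.map_mul] at hw
  have hgoal1 : eval (fun t => Psi k n p q r (trunc l w) t.1 t.2.1 t.2.2) P ≠ 0 := by
    rw [← eval_S n p q r l w P]
    exact left_ne_zero_of_mul hw
  have hgoal2 : eval (fun t => Psi k n p q r (trunc l w) t.1 t.2.1 t.2.2) Q ≠ 0 := by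
    rw [← eval_S n p q r l w Q]
    exact right_ne_zero_of_mul hw
  have hmem : Psi k n p q r (trunc l w) ∈ Sset k n p q r l := ⟨w, rfl⟩
  exact ⟨Psi k n p q r (trunc l w), hmem, hP2 hgoal1, hQ2 hgoal2⟩

/-- The separating polynomial for the `l`-th step of the chain. -/
lemma sep {k : Type*} [Field k] {n p q r : ℕ} (hpq : p + q = n) (hqp : q ≤ p) (hq1 : 1 ≤ q)
    (hr1 : 0 < r) {l : ℕ} (hl : l < (r + 1) * (p * q)) :
    ∃ g : MvPolynomial (Fin r × Fin n × Fin n) k,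
      (∀ v : ℕ → k, eval (fun t => Psi k n p q r (trunc l v) t.1 t.2.1 t.2.2) g = 0) ∧
      (∃ x ∈ Sset k n p q r (l + 1), eval (fun t => x t.1 t.2.1 t.2.2) g ≠ 0) := by
  have hp1 : 0 < p := le_trans hq1 hqp
  by_cases hl' : l < q * p
  · -- an E-coordinate
    have hrow : l / p < q := (Nat.div_lt_iff_lt_mul hp1).mpr hl'
    have hcol : l % p < p := Nat.mod_lt _ hp1
    have hidx : cIdx p (l / p) (l % p) = l := by
      rw [cIdx, Nat.mul_comm]; exact Nat.div_add_mod l p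
    have hrown : l / p < n := by omega
    have hcoln : l % p < n := by omega
    have hB : ∀ (v : ℕ → k) (l'' : ℕ), l'' ≤ l + 1 → ∀ c',
        trunc l'' v (bIdx p q 0 (l / p) c') = 0 := by
      intro v l'' hl'' c'
      exact if_neg (Nat.not_lt.mpr (le_trans hl''
        (Nat.succ_le_of_lt (lt_of_lt_of_le hl' (bIdx_ge p q 0 (l / p) c')))))
    refine ⟨X (⟨0, hr1⟩, ⟨l / p, hrown⟩, ⟨l % p, hcoln⟩), ?_, ?_⟩
    · intro v
      rw [eval_X]
      show PsiM k n p q 0 (trunc l v) ⟨l / p, hrown⟩ ⟨l % p, hcoln⟩ = 0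
      rw [PsiM_lo_lo k q 0 _ (show (⟨l / p, hrown⟩ : Fin n).val < p by show l / p < p; omega)
          (show (⟨l % p, hcoln⟩ : Fin n).val < p from hcol),
        NE_entry k _ (show (⟨l / p, hrown⟩ : Fin n).val < q from hrow) hqp hpq hcol
          (hB v l (Nat.le_succ l)),
        show ((⟨l / p, hrown⟩ : Fin n) : ℕ) = l / p from rfl,
        show ((⟨l % p, hcoln⟩ : Fin n) : ℕ) = l % p from rfl,
        hidx, show trunc (k := k) l v l = 0 from if_neg (lt_irrefl l), neg_zero]
    · refine ⟨Psi k n p q r (trunc (l + 1) (fun t => if t = l then 1 else 0)), ⟨_, rfl⟩, ?_⟩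
      rw [eval_X]
      show PsiM k n p q 0 (trunc (l + 1) (fun t => if t = l then 1 else 0))
          ⟨l / p, hrown⟩ ⟨l % p, hcoln⟩ ≠ 0
      rw [PsiM_lo_lo k q 0 _ (show (⟨l / p, hrown⟩ : Fin n).val < p by show l / p < p; omega)
          (show (⟨l % p, hcoln⟩ : Fin n).val < p from hcol),
        NE_entry k _ (show (⟨l / p, hrown⟩ : Fin n).val < q from hrow) hqp hpq hcol
          (hB _ (l + 1) le_rfl),
        show ((⟨l / p, hrown⟩ : Fin n) : ℕ) = l / p from rfl,
        show ((⟨l % p, hcoln⟩ : Fin n) : ℕ) = l % p from rfl,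
        hidx,
        show trunc (k := k) (l + 1) (fun t => if t = l then 1 else 0) l = 1 from
          by rw [trunc_apply, if_pos (Nat.lt_succ_self l), if_pos rfl]]
      exact neg_ne_zero.mpr one_ne_zero
  · -- a B-coordinate
    push_neg at hl'
    have hpq0 : 0 < p * q := Nat.mul_pos hp1 hq1
    have hl2 : l - q * p < r * (p * q) := by
      rw [Nat.sub_lt_iff_lt_add hl']
      calc l < (r + 1) * (p * q) := hl
      _ = r * (p * q) + q * p := by ring
    have hi : (l - q * p) / (p * q) < r := (Nat.div_lt_iff_lt_mul hpq0).mpr hl2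
    have hrest : (l - q * p) % (p * q) < p * q := Nat.mod_lt _ hpq0
    have ha : (l - q * p) % (p * q) / q < p := (Nat.div_lt_iff_lt_mul hq1).mpr hrest
    have hc : (l - q * p) % (p * q) % q < q := Nat.mod_lt _ hq1
    set i := (l - q * p) / (p * q) with hidef
    set a := (l - q * p) % (p * q) / q with hadef
    set c := (l - q * p) % (p * q) % q with hcdef
    have hidx : bIdx p q i a c = l := by
      rw [bIdx]
      have e1 : a * q + c = (l - q * p) % (p * q) := by
        rw [hadef, hcdef, Nat.mul_comm]; exact Nat.div_add_mod _ q
      have e2 : i * (p * q) + (l - q * p) % (p * q) = l - q * p := by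
        rw [hidef, Nat.mul_comm]; exact Nat.div_add_mod _ (p * q)
      rw [e1, add_assoc, e2]
      exact Nat.add_sub_cancel' hl'
    have han : a < n := by omega
    have hbn : p + c < n := by omega
    refine ⟨X (⟨i, hi⟩, ⟨a, han⟩, ⟨p + c, hbn⟩)
      - C (if i = 0 ∧ p + c = a + p then (1 : k) else 0), ?_, ?_⟩
    · intro v
      rw [_root_.map_sub, eval_X, eval_C]
      show PsiM k n p q i (trunc l v) ⟨a, han⟩ ⟨p + c, hbn⟩
          - (if i = 0 ∧ p + c = a + p then (1 : k) else 0) = 0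
      rw [PsiM_lo_hi k q i _ (show (⟨a, han⟩ : Fin n).val < p from ha)
          (show p ≤ ((⟨p + c, hbn⟩ : Fin n) : ℕ) from Nat.le_add_right p c),
        NkM_apply,
        show ((⟨a, han⟩ : Fin n) : ℕ) = a from rfl,
        show ((⟨p + c, hbn⟩ : Fin n) : ℕ) = p + c from rfl,
        if_pos (⟨ha, Nat.le_add_right p c⟩ : a < p ∧ p ≤ p + c),
        show p + c - p = c from by omega,
        show trunc (k := k) l v (bIdx p q i a c) = 0 from
          if_neg (by rw [hidx]; exact lt_irrefl l),
        zero_add, sub_self]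
    · refine ⟨Psi k n p q r (trunc (l + 1) (fun t => if t = l then 1 else 0)), ⟨_, rfl⟩, ?_⟩
      rw [_root_.map_sub, eval_X, eval_C]
      show PsiM k n p q i (trunc (l + 1) (fun t => if t = l then 1 else 0)) ⟨a, han⟩ ⟨p + c, hbn⟩
          - (if i = 0 ∧ p + c = a + p then (1 : k) else 0) ≠ 0
      rw [PsiM_lo_hi k q i _ (show (⟨a, han⟩ : Fin n).val < p from ha)
          (show p ≤ ((⟨p + c, hbn⟩ : Fin n) : ℕ) from Nat.le_add_right p c),
        NkM_apply,
        show ((⟨a, han⟩ : Fin n) : ℕ) = a from rfl,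
        show ((⟨p + c, hbn⟩ : Fin n) : ℕ) = p + c from rfl,
        if_pos (⟨ha, Nat.le_add_right p c⟩ : a < p ∧ p ≤ p + c),
        show p + c - p = c from by omega,
        show trunc (k := k) (l + 1) (fun t => if t = l then 1 else 0) (bIdx p q i a c) = 1 from
          by rw [hidx, trunc_apply, if_pos (Nat.lt_succ_self l), if_pos rfl],
        add_sub_cancel_right]
      exact one_ne_zero

end NilCommDimAux

open NilCommDimAux in
/-- For all integers `n, r ≥ 2`, `dim C_r(N_n) ≥ (r+1)·⌊n²/4⌋`. -/
theorem dim_nilCommTuples_ge (k : Type*) [Field k] [IsAlgClosed k]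
    (n r : ℕ) (hn : 2 ≤ n) (hr : 2 ≤ r) :
    letI := matTupleZariski k n r
    (((r + 1) * (n ^ 2 / 4) : ℕ) : WithBot ℕ∞)
      ≤ topologicalKrullDim (nilCommTuples k n r) := by
  letI := matTupleZariski k n r
  show (((r + 1) * (n ^ 2 / 4) : ℕ) : WithBot ℕ∞)
      ≤ topologicalKrullDim (nilCommTuples k n r)
  obtain ⟨p, q, hpq, hqp, hq1, hpq4⟩ :
      ∃ p q : ℕ, p + q = n ∧ q ≤ p ∧ 1 ≤ q ∧ p * q = n ^ 2 / 4 := by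
    refine ⟨n - n / 2, n / 2, by omega, by omega, by omega, ?_⟩
    obtain ⟨c, hc | hc⟩ := Nat.even_or_odd' n
    · subst hc
      rw [show 2 * c / 2 = c by omega, show 2 * c - c = c by omega,
        show (2 * c) ^ 2 = 4 * (c * c) by ring]
      generalize c * c = Y
      omega
    · subst hc
      rw [show (2 * c + 1) / 2 = c by omega, show 2 * c + 1 - c = c + 1 by omega,
        show (2 * c + 1) ^ 2 = 4 * ((c + 1) * c) + 1 by ring]
      generalize (c + 1) * c = Y
      omega
  have hr1 : 0 < r := by omega
  set M := (r + 1) * (p * q) with hM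
  -- closed zero loci
  have hclosed : ∀ g : MvPolynomial (Fin r × Fin n × Fin n) k,
      IsClosed {x : Fin r → Matrix (Fin n) (Fin n) k |
        eval (fun t => x t.1 t.2.1 t.2.2) g = 0} := by
    intro g
    rw [← isOpen_compl_iff, Set.compl_setOf]
    exact TopologicalSpace.GenerateOpen.basic _ ⟨g, rfl⟩
  -- irreducibility of the pieces of the chain, inside the subspace
  have hTirr : ∀ l : ℕ, IsIrreducible
      (Subtype.val ⁻¹' closure (Sset k n p q r l) : Set ↥(nilCommTuples k n r)) := by
    intro l
    constructor
    · exact ⟨⟨Psi k n p q r (trunc l 0), Sset_sub k n p q r l ⟨0, rfl⟩⟩,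
        subset_closure ⟨0, rfl⟩⟩
    · rintro u v hu hv ⟨y₁, hy₁c, hy₁u⟩ ⟨y₂, hy₂c, hy₂v⟩
      obtain ⟨U, hU, rfl⟩ := isOpen_induced_iff.mp hu
      obtain ⟨V, hV, rfl⟩ := isOpen_induced_iff.mp hv
      obtain ⟨x₁, hx₁U, hx₁S⟩ := mem_closure_iff.mp hy₁c U hU hy₁u
      obtain ⟨x₂, hx₂V, hx₂S⟩ := mem_closure_iff.mp hy₂c V hV hy₂v
      obtain ⟨x, hxS, hxU, hxV⟩ :=
        S_preirr n p q r l hU hV ⟨x₁, hx₁S, hx₁U⟩ ⟨x₂, hx₂S, hx₂V⟩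
      exact ⟨⟨x, Sset_sub k n p q r l hxS⟩, subset_closure hxS, hxU, hxV⟩
  -- the chain
  let F : Fin (M + 1) → IrreducibleCloseds ↥(nilCommTuples k n r) := fun l =>
    ⟨Subtype.val ⁻¹' closure (Sset k n p q r l.val), hTirr l.val,
      isClosed_closure.preimage continuous_subtype_val⟩
  have hFstep : ∀ i : Fin M, F i.castSucc < F i.succ := by
    intro i
    rw [SetLike.lt_iff_le_and_exists]
    constructor
    · intro y hy
      exact Set.preimage_mono (closure_mono (Sset_mono k n p q r (Nat.le_succ i.val))) hy
    · obtain ⟨g, hg0, x, hxS, hgx⟩ := sep (k := k) hpq hqp hq1 hr1 i.isLt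
      refine ⟨⟨x, Sset_sub k n p q r (i.val + 1) hxS⟩, subset_closure hxS, fun hx2 => ?_⟩
      exact hgx (closure_minimal (by rintro _ ⟨v, rfl⟩; exact hg0 v) (hclosed g) hx2)
  let series : LTSeries (IrreducibleCloseds ↥(nilCommTuples k n r)) := ⟨M, F, hFstep⟩
  have hlen := Order.LTSeries.length_le_krullDim series
  have hMeq : (r + 1) * (n ^ 2 / 4) = M := by rw [hM, hpq4]
  rw [hMeq]
  exact hlen
end

section
/- For all integers n, r ≥ 2, dim C_r(Mat_n(k)) ≥ (r+1)·⌊n²/4⌋ + r. -/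
open MvPolynomial Matrix TopologicalSpace

/-- `C_r(Mat_n(k))`: the set of commuting `r`-tuples of `n × n` matrices. -/
def commTuples (k : Type*) [Field k] (n r : ℕ) :
    Set (Fin r → Matrix (Fin n) (Fin n) k) :=
  {x | ∀ i j, x i * x j = x j * x i}

namespace CTD
attribute [local instance] matTupleZariski
variable {k : Type*} [Field k] {n r : ℕ}

def gens (k : Type*) [Field k] (n r : ℕ) : Set (Set (Fin r → Matrix (Fin n) (Fin n) k)) :=
  {U | ∃ p : MvPolynomial (Fin r × Fin n × Fin n) k,
      U = {x | MvPolynomial.eval (fun q => x q.1 q.2.1 q.2.2) p ≠ 0}}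

lemma matTupleZariski_eq (k : Type*) [Field k] (n r : ℕ) :
    matTupleZariski k n r = generateFrom (gens k n r) := rfl

lemma exists_basic {U : Set (Fin r → Matrix (Fin n) (Fin n) k)}
    (hU : TopologicalSpace.GenerateOpen (gens k n r) U) {x} :
    x ∈ U →
    ∃ p : MvPolynomial (Fin r × Fin n × Fin n) k,
      MvPolynomial.eval (fun q => x q.1 q.2.1 q.2.2) p ≠ 0 ∧
      ∀ y, MvPolynomial.eval (fun q => y q.1 q.2.1 q.2.2) p ≠ 0 → y ∈ U := by
  induction hU with
  | basic V hV =>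
    obtain ⟨p, rfl⟩ := hV
    exact fun hx => ⟨p, hx, fun y hy => hy⟩
  | univ => exact fun _ => ⟨1, by simp, fun y _ => trivial⟩
  | inter U V _ _ ihU ihV =>
    intro hx
    obtain ⟨p, hp, hpU⟩ := ihU hx.1
    obtain ⟨q, hq, hqV⟩ := ihV hx.2
    refine ⟨p * q, ?_, fun y hy => ?_⟩
    · rw [_root_.map_mul]; exact mul_ne_zero hp hq
    · rw [_root_.map_mul] at hy
      exact ⟨hpU _ (left_ne_zero_of_mul hy), hqV _ (right_ne_zero_of_mul hy)⟩
  | sUnion S _ ih =>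
    intro hx
    obtain ⟨V, hV, hxV⟩ := hx
    obtain ⟨p, h1, h2⟩ := ih V hV hxV
    exact ⟨p, h1, fun y hy => ⟨V, hV, h2 y hy⟩⟩

lemma isClosed_zlocus (p : MvPolynomial (Fin r × Fin n × Fin n) k) :
    IsClosed {x : Fin r → Matrix (Fin n) (Fin n) k |
      MvPolynomial.eval (fun q => x q.1 q.2.1 q.2.2) p = 0} :=
  ⟨TopologicalSpace.GenerateOpen.basic _ ⟨p, rfl⟩⟩



noncomputable def comPoly (k : Type*) [Field k] (n r : ℕ) (i j : Fin r) (a b : Fin n) :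
    MvPolynomial (Fin r × Fin n × Fin n) k :=
  (∑ c, X (i, a, c) * X (j, c, b)) - ∑ c, X (j, a, c) * X (i, c, b)

lemma eval_comPoly (x : Fin r → Matrix (Fin n) (Fin n) k) (i j : Fin r) (a b : Fin n) :
    MvPolynomial.eval (fun q => x q.1 q.2.1 q.2.2) (comPoly k n r i j a b)
      = (x i * x j) a b - (x j * x i) a b := by
  simp [comPoly, Matrix.mul_apply]

lemma isClosed_commTuples :
    IsClosed (commTuples k n r) := by
  have hset : commTuples k n r = ⋂ (i : Fin r) (j : Fin r) (a : Fin n) (b : Fin n),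
      {x | MvPolynomial.eval (fun q => x q.1 q.2.1 q.2.2) (comPoly k n r i j a b) = 0} := by
    ext x
    simp only [commTuples, Set.mem_setOf_eq, Set.mem_iInter, eval_comPoly, sub_eq_zero]
    constructor
    · intro h i j a b; rw [h i j]
    · intro h i j; ext a b; exact h i j a b
  rw [hset]
  exact isClosed_iInter fun i => isClosed_iInter fun j => isClosed_iInter fun a =>
    isClosed_iInter fun b => isClosed_zlocus _

lemma isIrreducible_poly_range [Infinite k] {P : Type*} (ψ : Fin r × Fin n × Fin n → MvPolynomial P k) :
    IsIrreducible (Set.range fun t : P → k =>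
      (fun i => Matrix.of fun a b => MvPolynomial.eval t (ψ (i, a, b)) :
        Fin r → Matrix (Fin n) (Fin n) k)) := by
  have key : ∀ (t : P → k) (p : MvPolynomial (Fin r × Fin n × Fin n) k),
      MvPolynomial.eval
        (fun q : Fin r × Fin n × Fin n =>
          (fun i => Matrix.of fun a b => MvPolynomial.eval t (ψ (i, a, b)) :
            Fin r → Matrix (Fin n) (Fin n) k) q.1 q.2.1 q.2.2) p
      = MvPolynomial.eval t (bind₁ ψ p) := by
    intro t p
    have h2 := MvPolynomial.eval₂Hom_bind₁ (RingHom.id k) t ψ p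
    have he : MvPolynomial.eval t (bind₁ ψ p) =
        MvPolynomial.eval (fun q => MvPolynomial.eval t (ψ q)) p := h2
    exact he.symm
  constructor
  · exact ⟨_, Set.mem_range_self (fun _ => (0 : k))⟩
  · rintro U V hU hV ⟨x, ⟨t, rfl⟩, hxU⟩ ⟨y, ⟨t', rfl⟩, hyV⟩
    obtain ⟨p, hp, hpU⟩ := exists_basic hU hxU
    obtain ⟨q, hq, hqV⟩ := exists_basic hV hyV
    rw [key] at hp hq
    have hp0 : bind₁ ψ p ≠ 0 := fun h => hp (by rw [h, map_zero])
    have hq0 : bind₁ ψ q ≠ 0 := fun h => hq (by rw [h, map_zero])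
    have hpq : bind₁ ψ p * bind₁ ψ q ≠ 0 := mul_ne_zero hp0 hq0
    have : ¬ ∀ s : P → k, MvPolynomial.eval s (bind₁ ψ p * bind₁ ψ q) = 0 := by
      intro h
      exact hpq (MvPolynomial.funext fun s => by rw [h s, map_zero])
    push_neg at this
    obtain ⟨s, hs⟩ := this
    rw [_root_.map_mul] at hs
    refine ⟨_, Set.mem_range_self s, ?_, ?_⟩
    · exact hpU _ (by rw [key]; exact left_ne_zero_of_mul hs)
    · exact hqV _ (by rw [key]; exact right_ne_zero_of_mul hs)


-- ### The parameter space and its enumeration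

abbrev PIdx (n r : ℕ) :=
  (Fin (n - n / 2) × Fin (n / 2)) ⊕ (Fin r ⊕ (Fin r × Fin (n / 2) × Fin (n - n / 2)))

def numC (n : ℕ) : ℕ := (n - n / 2) * (n / 2)
def numD (n r : ℕ) : ℕ := numC n + (r + r * (n / 2 * (n - n / 2)))

def pEnum (n r : ℕ) : PIdx n r ≃ Fin (numD n r) :=
  (Equiv.sumCongr finProdFinEquiv
    ((Equiv.sumCongr (Equiv.refl (Fin r))
      ((Equiv.prodCongr (Equiv.refl (Fin r)) finProdFinEquiv).trans finProdFinEquiv)).trans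
      finSumFinEquiv)).trans finSumFinEquiv

lemma pEnum_inl_lt (c : Fin (n - n / 2) × Fin (n / 2)) :
    ((pEnum n r (Sum.inl c) : Fin (numD n r)) : ℕ) < numC n := by
  simp only [pEnum, Equiv.trans_apply, Equiv.sumCongr_apply, Sum.map_inl,
    finSumFinEquiv_apply_left, Fin.coe_castAdd]
  exact (finProdFinEquiv c).isLt

lemma pEnum_inr_ge (x : Fin r ⊕ (Fin r × Fin (n / 2) × Fin (n - n / 2))) :
    numC n ≤ ((pEnum n r (Sum.inr x) : Fin (numD n r)) : ℕ) := by
  simp only [pEnum, Equiv.trans_apply, Equiv.sumCongr_apply, Sum.map_inr,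
    finSumFinEquiv_apply_right, Fin.coe_natAdd]
  exact Nat.le_add_right _ _


-- ### The commuting family

section Defs
variable (k : Type*) [Field k] (n r : ℕ)

noncomputable def jMat : Matrix (Fin (n / 2)) (Fin (n - n / 2)) (MvPolynomial (PIdx n r) k) :=
  Matrix.of fun u v => if (v : ℕ) = (u : ℕ) then 1 else 0

noncomputable def cMat : Matrix (Fin (n - n / 2)) (Fin (n / 2)) (MvPolynomial (PIdx n r) k) :=
  Matrix.of fun u v => X (Sum.inl (u, v))

noncomputable def bMat (i : Fin r) :
    Matrix (Fin (n / 2)) (Fin (n - n / 2)) (MvPolynomial (PIdx n r) k) :=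
  Matrix.of fun u v => X (Sum.inr (Sum.inr (i, u, v)))

noncomputable def bMat' (i : Fin r) :
    Matrix (Fin (n / 2)) (Fin (n - n / 2)) (MvPolynomial (PIdx n r) k) :=
  (if (i : ℕ) = 0 then jMat k n r else 0) + bMat k n r i

noncomputable def lMat :
    Matrix (Fin (n / 2) ⊕ Fin (n - n / 2)) (Fin (n / 2) ⊕ Fin (n - n / 2))
      (MvPolynomial (PIdx n r) k) :=
  Matrix.fromBlocks 0 0 (cMat k n r) 0

noncomputable def aX (i : Fin r) : MvPolynomial (PIdx n r) k := X (Sum.inr (Sum.inl i))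

noncomputable def mMat (i : Fin r) :
    Matrix (Fin (n / 2) ⊕ Fin (n - n / 2)) (Fin (n / 2) ⊕ Fin (n - n / 2))
      (MvPolynomial (PIdx n r) k) :=
  aX k n r i • 1 + Matrix.fromBlocks 0 (bMat' k n r i) 0 0

noncomputable def xBlk (i : Fin r) :
    Matrix (Fin (n / 2) ⊕ Fin (n - n / 2)) (Fin (n / 2) ⊕ Fin (n - n / 2))
      (MvPolynomial (PIdx n r) k) :=
  (1 + lMat k n r) * mMat k n r i * (1 - lMat k n r)

def blkEquiv (n : ℕ) : Fin (n / 2) ⊕ Fin (n - n / 2) ≃ Fin n :=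
  finSumFinEquiv.trans (finCongr (Nat.add_sub_cancel' (Nat.div_le_self n 2)))

noncomputable def xPoly (i : Fin r) : Matrix (Fin n) (Fin n) (MvPolynomial (PIdx n r) k) :=
  Matrix.reindexAlgEquiv k (MvPolynomial (PIdx n r) k) (blkEquiv n) (xBlk k n r i)

noncomputable def phi (t : PIdx n r → k) : Fin r → Matrix (Fin n) (Fin n) k :=
  fun i => Matrix.of fun a b => MvPolynomial.eval t (xPoly k n r i a b)

end Defs

section Alg
variable {k : Type*} [Field k] {n r : ℕ}

lemma lMat_sq : lMat k n r * lMat k n r = 0 := by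
  simp [lMat, Matrix.fromBlocks_multiply]

lemma one_sub_mul_one_add : (1 - lMat k n r) * (1 + lMat k n r) = 1 := by
  rw [mul_add, mul_one, sub_mul, one_mul, lMat_sq, sub_zero, sub_add_cancel]

lemma one_add_mul_one_sub : (1 + lMat k n r) * (1 - lMat k n r) = 1 := by
  rw [mul_sub, mul_one, add_mul, one_mul, lMat_sq, add_zero, add_sub_cancel_right]

lemma mMat_comm (i j : Fin r) : mMat k n r i * mMat k n r j = mMat k n r j * mMat k n r i := by
  have hNN : ∀ i j : Fin r,
      Matrix.fromBlocks 0 (bMat' k n r i) 0 0 * Matrix.fromBlocks 0 (bMat' k n r j) 0 0 =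
        (0 : Matrix (Fin (n / 2) ⊕ Fin (n - n / 2)) (Fin (n / 2) ⊕ Fin (n - n / 2))
          (MvPolynomial (PIdx n r) k)) := by
    intro i j
    simp [Matrix.fromBlocks_multiply]
  have expand : ∀ (a b : MvPolynomial (PIdx n r) k)
      (N N' : Matrix (Fin (n / 2) ⊕ Fin (n - n / 2)) (Fin (n / 2) ⊕ Fin (n - n / 2))
        (MvPolynomial (PIdx n r) k)), N * N' = 0 →
      (a • 1 + N) * (b • 1 + N') = (a * b) • (1 : Matrix _ _ _) + (a • N' + b • N) := by
    intro a b N N' h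
    rw [add_mul, mul_add, mul_add, smul_mul_assoc, smul_mul_assoc, one_mul,
      mul_smul_comm, smul_smul, mul_one, h, add_zero]
    simp only [one_mul]
    abel
  rw [mMat, mMat, expand _ _ _ _ (hNN i j), expand _ _ _ _ (hNN j i), mul_comm,
    add_comm (aX k n r i • Matrix.fromBlocks 0 (bMat' k n r j) 0 0)]

lemma xBlk_comm (i j : Fin r) : xBlk k n r i * xBlk k n r j = xBlk k n r j * xBlk k n r i := by
  have key : ∀ i j : Fin r, xBlk k n r i * xBlk k n r j =
      (1 + lMat k n r) * (mMat k n r i * mMat k n r j) * (1 - lMat k n r) := by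
    intro i j
    rw [xBlk, xBlk]
    simp only [← mul_assoc]
    rw [mul_assoc ((1 + lMat k n r) * mMat k n r i) (1 - lMat k n r) (1 + lMat k n r),
      one_sub_mul_one_add, mul_one, mul_assoc (1 + lMat k n r)]
  rw [key i j, key j i, mMat_comm]

lemma xPoly_comm (i j : Fin r) : xPoly k n r i * xPoly k n r j = xPoly k n r j * xPoly k n r i := by
  rw [xPoly, xPoly, ← _root_.map_mul, ← _root_.map_mul, xBlk_comm]

lemma phi_mem_commTuples (t : PIdx n r → k) : phi k n r t ∈ commTuples k n r := by
  intro i j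
  have hmap : ∀ i : Fin r, phi k n r t i = (xPoly k n r i).map (MvPolynomial.eval t) := fun _ => rfl
  rw [hmap, hmap, ← Matrix.map_mul, ← Matrix.map_mul, xPoly_comm]

end Alg


section Blocks
variable {k : Type*} [Field k] {n r : ℕ}

lemma mMat_eq (i : Fin r) : mMat k n r i =
    Matrix.fromBlocks (aX k n r i • 1) (bMat' k n r i) 0 (aX k n r i • 1) := by
  have h1 : (1 : Matrix (Fin (n / 2) ⊕ Fin (n - n / 2)) (Fin (n / 2) ⊕ Fin (n - n / 2))
      (MvPolynomial (PIdx n r) k)) = Matrix.fromBlocks 1 0 0 1 := Matrix.fromBlocks_one.symm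
  rw [mMat, h1, Matrix.fromBlocks_smul, Matrix.fromBlocks_add]
  simp

lemma xBlk_expand (i : Fin r) : xBlk k n r i =
    mMat k n r i - mMat k n r i * lMat k n r +
      (lMat k n r * mMat k n r i - lMat k n r * (mMat k n r i * lMat k n r)) := by
  rw [xBlk]; noncomm_ring

lemma xBlk_tr (i : Fin r) (u : Fin (n / 2)) (v : Fin (n - n / 2)) :
    xBlk k n r i (Sum.inl u) (Sum.inr v) = bMat' k n r i u v := by
  rw [xBlk_expand, mMat_eq, lMat]
  simp [Matrix.fromBlocks_multiply, Matrix.fromBlocks_add]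

lemma xBlk_br (i : Fin r) (u v : Fin (n - n / 2)) :
    xBlk k n r i (Sum.inr u) (Sum.inr v) =
      (aX k n r i • (1 : Matrix (Fin (n - n / 2)) (Fin (n - n / 2)) (MvPolynomial (PIdx n r) k))
        + cMat k n r * bMat' k n r i) u v := by
  rw [xBlk_expand, mMat_eq, lMat]
  simp [Matrix.fromBlocks_multiply, Matrix.fromBlocks_add]

lemma phi_apply (t : PIdx n r → k) (i : Fin r) (a b : Fin n) :
    phi k n r t i a b =
      MvPolynomial.eval t
        (xBlk k n r i ((blkEquiv n).symm a) ((blkEquiv n).symm b)) := by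
  simp [phi, xPoly, Matrix.reindexAlgEquiv_apply, Matrix.reindex_apply, Matrix.submatrix_apply]

lemma phi_topright (t : PIdx n r → k) (i : Fin r) (u : Fin (n / 2)) (v : Fin (n - n / 2)) :
    phi k n r t i (blkEquiv n (Sum.inl u)) (blkEquiv n (Sum.inr v)) =
      (if (i : ℕ) = 0 then (if (v : ℕ) = (u : ℕ) then (1 : k) else 0) else 0)
        + t (Sum.inr (Sum.inr (i, u, v))) := by
  rw [phi_apply, Equiv.symm_apply_apply, Equiv.symm_apply_apply, xBlk_tr, bMat']
  by_cases hi : (i : ℕ) = 0 <;>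
    simp [hi, jMat, bMat, apply_ite (MvPolynomial.eval t)]

lemma phi_botright (t : PIdx n r → k) (ht : ∀ x, t (Sum.inr x) = 0) (i : Fin r)
    (hi : (i : ℕ) = 0) (u : Fin (n - n / 2)) (v : Fin (n / 2)) (hv : (v : ℕ) < n - n / 2) :
    phi k n r t i (blkEquiv n (Sum.inr u)) (blkEquiv n (Sum.inr ⟨(v : ℕ), hv⟩)) =
      t (Sum.inl (u, v)) := by
  rw [phi_apply, Equiv.symm_apply_apply, Equiv.symm_apply_apply, xBlk_br,
    Matrix.add_apply, Matrix.smul_apply, Matrix.mul_apply, map_add, smul_eq_mul,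
    _root_.map_mul, aX, eval_X, ht (Sum.inl i), zero_mul, zero_add, map_sum]
  have h2 : ∀ w : Fin (n / 2),
      (MvPolynomial.eval t) (cMat k n r u w * bMat' k n r i w ⟨(v : ℕ), hv⟩)
        = t (Sum.inl (u, w)) * (if (v : ℕ) = (w : ℕ) then 1 else 0) := by
    intro w
    rw [_root_.map_mul, bMat', if_pos hi, Matrix.add_apply, map_add]
    have hj : (MvPolynomial.eval t) (jMat k n r w ⟨(v : ℕ), hv⟩)
        = if (v : ℕ) = (w : ℕ) then 1 else 0 := by
      rw [jMat]
      simp only [Matrix.of_apply]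
      split_ifs with h h' h' <;> simp_all
    rw [cMat, Matrix.of_apply, eval_X, bMat, Matrix.of_apply, eval_X,
      ht (Sum.inr (i, w, ⟨(v : ℕ), hv⟩)), add_zero, hj]
  rw [Finset.sum_congr rfl (fun w _ => h2 w)]
  simp only [Fin.val_eq_val, mul_ite, mul_one, mul_zero]
  rw [Finset.sum_ite_eq]
  simp

lemma det_xBlk (i : Fin r) : (xBlk k n r i).det = aX k n r i ^ n := by
  rw [xBlk, Matrix.det_mul, Matrix.det_mul]
  have h1 : (1 + lMat k n r).det * (mMat k n r i).det * (1 - lMat k n r).det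
      = (mMat k n r i).det * ((1 + lMat k n r).det * (1 - lMat k n r).det) := by ring
  rw [h1, ← Matrix.det_mul, one_add_mul_one_sub, Matrix.det_one, mul_one]
  rw [mMat_eq, Matrix.det_fromBlocks_zero₂₁, Matrix.det_smul, Matrix.det_smul,
    Matrix.det_one, Matrix.det_one, mul_one, mul_one, Fintype.card_fin, Fintype.card_fin,
    ← pow_add]
  congr 1
  omega

lemma det_phi (t : PIdx n r → k) (i : Fin r) :
    (phi k n r t i).det = (t (Sum.inr (Sum.inl i))) ^ n := by
  have hmap : phi k n r t i
      = (MvPolynomial.eval t : MvPolynomial (PIdx n r) k →+* k).mapMatrix (xPoly k n r i) := rfl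
  rw [hmap, ← RingHom.map_det, xPoly, Matrix.reindexAlgEquiv_apply, Matrix.det_reindex_self,
    det_xBlk, map_pow, aX, eval_X]

end Blocks

section Trunc
variable (k : Type*) [Field k] (n r : ℕ)

def trunc (s : ℕ) (t : PIdx n r → k) : PIdx n r → k :=
  fun p => if ((pEnum n r p : Fin (numD n r)) : ℕ) < s then t p else 0

noncomputable def truncX (s : ℕ) : PIdx n r → MvPolynomial (PIdx n r) k :=
  fun p => if ((pEnum n r p : Fin (numD n r)) : ℕ) < s then X p else 0

end Trunc

section Chain
variable {k : Type*} [Field k] {n r : ℕ}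

lemma trunc_trunc {s s' : ℕ} (h : s ≤ s') (t : PIdx n r → k) :
    trunc k n r s' (trunc k n r s t) = trunc k n r s t := by
  funext p
  simp only [trunc]
  by_cases h1 : ((pEnum n r p : Fin (numD n r)) : ℕ) < s
  · rw [if_pos (by omega : ((pEnum n r p : Fin (numD n r)) : ℕ) < s'), if_pos h1]
  · rw [if_neg h1, ite_self]

lemma eval_truncX (s : ℕ) (t : PIdx n r → k) (p : PIdx n r) :
    MvPolynomial.eval t (truncX k n r s p) = trunc k n r s t p := by
  rw [truncX, trunc, apply_ite (MvPolynomial.eval t), eval_X, map_zero]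

lemma phi_trunc_eq (s : ℕ) (t : PIdx n r → k) :
    phi k n r (trunc k n r s t) = fun i => Matrix.of fun a b =>
      MvPolynomial.eval t (bind₁ (truncX k n r s) (xPoly k n r i a b)) := by
  funext i a b
  show MvPolynomial.eval (trunc k n r s t) (xPoly k n r i a b)
      = MvPolynomial.eval t (bind₁ (truncX k n r s) (xPoly k n r i a b))
  have h2 := MvPolynomial.eval₂Hom_bind₁ (RingHom.id k) t (truncX k n r s) (xPoly k n r i a b)
  have he : MvPolynomial.eval t (bind₁ (truncX k n r s) (xPoly k n r i a b))
      = MvPolynomial.eval (fun p => MvPolynomial.eval t (truncX k n r s p))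
        (xPoly k n r i a b) := h2
  have hfun : (fun p => MvPolynomial.eval t (truncX k n r s p)) = trunc k n r s t :=
    funext (eval_truncX s t)
  rw [he, hfun]

lemma range_phi_trunc_mono {s s' : ℕ} (h : s ≤ s') :
    Set.range (fun t => phi k n r (trunc k n r s t))
      ⊆ Set.range (fun t => phi k n r (trunc k n r s' t)) := by
  rintro _ ⟨t, rfl⟩
  exact ⟨trunc k n r s t, by
    show phi k n r (trunc k n r s' (trunc k n r s t)) = phi k n r (trunc k n r s t)
    rw [trunc_trunc h]⟩

lemma isIrreducible_range_phi_trunc [Infinite k] (s : ℕ) :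
    IsIrreducible (Set.range (fun t => phi k n r (trunc k n r s t))) := by
  have hEq : (fun t : PIdx n r → k => phi k n r (trunc k n r s t))
      = fun t => (fun i => Matrix.of fun a b => MvPolynomial.eval t
          ((fun q : Fin r × Fin n × Fin n =>
            bind₁ (truncX k n r s) (xPoly k n r q.1 q.2.1 q.2.2)) (i, a, b)) :
          Fin r → Matrix (Fin n) (Fin n) k) := by
    funext t
    exact phi_trunc_eq s t
  rw [hEq]
  exact isIrreducible_poly_range
    (fun q : Fin r × Fin n × Fin n => bind₁ (truncX k n r s) (xPoly k n r q.1 q.2.1 q.2.2))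

noncomputable def detPoly (k : Type*) [Field k] (n r : ℕ) (i : Fin r) :
    MvPolynomial (Fin r × Fin n × Fin n) k :=
  (Matrix.of fun a b : Fin n => (X (i, a, b) : MvPolynomial (Fin r × Fin n × Fin n) k)).det

lemma eval_detPoly (x : Fin r → Matrix (Fin n) (Fin n) k) (i : Fin r) :
    MvPolynomial.eval (fun q => x q.1 q.2.1 q.2.2) (detPoly k n r i) = (x i).det := by
  rw [detPoly, RingHom.map_det]
  congr 1
  ext a b
  simp

/-- The separating polynomial for step `s` of the chain. -/
lemma exists_sep (hn : 2 ≤ n) (hr : 1 ≤ r) {s : ℕ} (hs : s < numD n r) :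
    ∃ F : MvPolynomial (Fin r × Fin n × Fin n) k,
      (∀ t, MvPolynomial.eval
        (fun q => phi k n r (trunc k n r s t) q.1 q.2.1 q.2.2) F = 0) ∧
      ∃ w : PIdx n r → k, trunc k n r (s + 1) w = w ∧
        MvPolynomial.eval (fun q => phi k n r w q.1 q.2.1 q.2.2) F ≠ 0 := by
  set p0 : PIdx n r := (pEnum n r).symm ⟨s, hs⟩ with hp0
  have hep0 : ((pEnum n r p0 : Fin (numD n r)) : ℕ) = s := by
    rw [hp0, Equiv.apply_symm_apply]
  set sing : PIdx n r → k := fun p => if p = p0 then 1 else 0 with hsing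
  have hsing_p0 : sing p0 = 1 := by rw [hsing]; simp
  have htrunc_sing : trunc k n r (s + 1) sing = sing := by
    funext p
    by_cases hp : p = p0
    · subst hp
      rw [trunc, if_pos (by omega)]
    · rw [trunc]
      have : sing p = 0 := by rw [hsing]; simp [hp]
      rw [this, ite_self]
  have htrunc_val : ∀ (t : PIdx n r → k), trunc k n r s t p0 = 0 := by
    intro t
    rw [trunc, if_neg (by omega)]
  rcases hcase : p0 with ⟨u, v⟩ | i | ⟨i, u, v⟩
  · -- a C-parameter: use the bottom-right matrix entry of x_0
    have hslt : s < numC n := by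
      have := pEnum_inl_lt (n := n) (r := r) (u, v)
      rwa [← hcase, hep0] at this
    have hv : (v : ℕ) < n - n / 2 := by
      have := v.isLt
      omega
    have hi0 : (0 : ℕ) < r := hr
    set i0 : Fin r := ⟨0, hi0⟩ with hi0def
    refine ⟨X (i0, blkEquiv n (Sum.inr u), blkEquiv n (Sum.inr ⟨(v : ℕ), hv⟩)), ?_, sing, htrunc_sing, ?_⟩
    · intro t
      rw [eval_X]
      have hkill : ∀ x, trunc k n r s t (Sum.inr x) = 0 := by
        intro x
        have := pEnum_inr_ge (n := n) (r := r) x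
        rw [trunc, if_neg (by omega)]
      have := phi_botright (trunc k n r s t) hkill i0 rfl u v hv
      rw [this, ← hcase, htrunc_val]
    · rw [eval_X]
      have hkill : ∀ x, sing (Sum.inr x) = 0 := by
        intro x
        rw [hsing]
        simp only [ite_eq_right_iff]
        intro hx
        rw [hcase] at hx
        exact absurd hx (by simp)
      have := phi_botright sing hkill i0 rfl u v hv
      rw [this, ← hcase, hsing_p0]
      exact one_ne_zero
  · -- an `a i` parameter: use the determinant of x_i
    refine ⟨detPoly k n r i, ?_, sing, htrunc_sing, ?_⟩
    · intro t
      rw [eval_detPoly, det_phi, ← hcase, htrunc_val, zero_pow (by omega)]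
    · rw [eval_detPoly, det_phi, ← hcase, hsing_p0, one_pow]
      exact one_ne_zero
  · -- a B-parameter: use the top-right matrix entry of x_i
    refine ⟨X (i, blkEquiv n (Sum.inl u), blkEquiv n (Sum.inr v))
        - C (if (i : ℕ) = 0 then (if (v : ℕ) = (u : ℕ) then (1 : k) else 0) else 0),
      ?_, sing, htrunc_sing, ?_⟩
    · intro t
      rw [map_sub, eval_X, eval_C, phi_topright, ← hcase, htrunc_val]
      ring
    · rw [map_sub, eval_X, eval_C, phi_topright, ← hcase, hsing_p0]
      simp

end Chain

section ZChain
variable {k : Type*} [Field k] {n r : ℕ}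

noncomputable def Zset (k : Type*) [Field k] (n r : ℕ) (s : ℕ) :
    Set (Fin r → Matrix (Fin n) (Fin n) k) :=
  closure (Set.range (fun t => phi k n r (trunc k n r s t)))

lemma Zset_mono {s s' : ℕ} (h : s ≤ s') : Zset k n r s ⊆ Zset k n r s' :=
  closure_mono (range_phi_trunc_mono h)

lemma Zset_sub_commTuples (s : ℕ) : Zset k n r s ⊆ commTuples k n r :=
  closure_minimal (by rintro _ ⟨t, rfl⟩; exact phi_mem_commTuples _) isClosed_commTuples

lemma Zset_irr [Infinite k] (s : ℕ) : IsIrreducible (Zset k n r s) :=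
  (isIrreducible_range_phi_trunc s).closure

lemma Zset_closed (s : ℕ) : IsClosed (Zset k n r s) := isClosed_closure

lemma Zset_strict (hn : 2 ≤ n) (hr : 1 ≤ r) {s : ℕ} (hs : s < numD n r) :
    ∃ w, w ∈ Zset k n r (s + 1) ∧ w ∉ Zset k n r s := by
  obtain ⟨F, hF0, w, hw, hFw⟩ := exists_sep (k := k) hn hr hs
  refine ⟨phi k n r w, ?_, ?_⟩
  · exact subset_closure ⟨w, show phi k n r (trunc k n r (s + 1) w) = phi k n r w from by rw [hw]⟩
  · intro hmem
    have hsub : Zset k n r s ⊆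
        {x | MvPolynomial.eval (fun q => x q.1 q.2.1 q.2.2) F = 0} :=
      closure_minimal (by rintro _ ⟨t, rfl⟩; exact hF0 t) (isClosed_zlocus F)
    exact hFw (hsub hmem)

lemma isIrreducible_preimage_val {X : Type*} [TopologicalSpace X] {S T : Set X}
    (hTS : T ⊆ S) (hT : IsIrreducible T) :
    IsIrreducible ((Subtype.val : S → X) ⁻¹' T) := by
  obtain ⟨x, hx⟩ := hT.1
  refine ⟨⟨⟨x, hTS hx⟩, hx⟩, ?_⟩
  rintro U V hU hV ⟨⟨x', hx'S⟩, hx'T, hx'U⟩ ⟨⟨y', hy'S⟩, hy'T, hy'V⟩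
  rw [isOpen_induced_iff] at hU hV
  obtain ⟨U', hU', rfl⟩ := hU
  obtain ⟨V', hV', rfl⟩ := hV
  obtain ⟨z, hzT, hzU', hzV'⟩ := hT.2 U' V' hU' hV' ⟨x', hx'T, hx'U⟩ ⟨y', hy'T, hy'V⟩
  exact ⟨⟨z, hTS hzT⟩, hzT, hzU', hzV'⟩

lemma numD_eq (n r : ℕ) : numD n r = (r + 1) * (n ^ 2 / 4) + r := by
  have hq : n ^ 2 / 4 = n / 2 * (n - n / 2) := by
    rcases Nat.even_or_odd' n with ⟨m, hm | hm⟩ <;> subst hm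
    · have h1 : (2 * m) ^ 2 = 4 * (m * m) := by ring
      rw [h1, Nat.mul_div_cancel_left _ (by norm_num : 0 < 4),
        show 2 * m / 2 = m from by omega, show 2 * m - m = m from by omega]
    · have h1 : (2 * m + 1) ^ 2 = 4 * (m * m + m) + 1 := by ring
      have h2 : ∀ A : ℕ, (4 * A + 1) / 4 = A := fun A => by omega
      rw [h1, h2, show (2 * m + 1) / 2 = m from by omega,
        show 2 * m + 1 - m = m + 1 from by omega]
      ring
  rw [numD, numC, hq]
  ring

end ZChain

end CTD


/-- For all integers `n, r ≥ 2`, `dim C_r(Mat_n(k)) ≥ (r+1)·⌊n²/4⌋ + r`. -/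
theorem dim_commTuples_ge (k : Type*) [Field k] [IsAlgClosed k]
    (n r : ℕ) (hn : 2 ≤ n) (hr : 2 ≤ r) :
    letI := matTupleZariski k n r
    (((r + 1) * (n ^ 2 / 4) + r : ℕ) : WithBot ℕ∞)
      ≤ topologicalKrullDim (commTuples k n r) := by
  letI := matTupleZariski k n r
  have hr1 : 1 ≤ r := by omega
  let ZC : Fin (CTD.numD n r + 1) → IrreducibleCloseds ↥(commTuples k n r) := fun s =>
    { carrier := (Subtype.val : ↥(commTuples k n r) → _) ⁻¹' CTD.Zset k n r (s : ℕ)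
      isIrreducible' := CTD.isIrreducible_preimage_val (CTD.Zset_sub_commTuples _)
        (CTD.Zset_irr _)
      isClosed' := (CTD.Zset_closed _).preimage continuous_subtype_val }
  have hstep : ∀ s : Fin (CTD.numD n r), ZC (Fin.castSucc s) < ZC s.succ := by
    intro s
    obtain ⟨w, hw1, hw2⟩ := CTD.Zset_strict (k := k) hn hr1 s.isLt
    have hwS : w ∈ commTuples k n r := CTD.Zset_sub_commTuples _ hw1
    have hle : ZC (Fin.castSucc s) ≤ ZC s.succ := by
      intro x hx
      have hsub : CTD.Zset k n r ((Fin.castSucc s : Fin _) : ℕ)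
          ⊆ CTD.Zset k n r ((s.succ : Fin _) : ℕ) :=
        CTD.Zset_mono (by simp [Fin.coe_castSucc, Fin.val_succ])
      exact hsub hx
    refine lt_of_le_of_ne hle ?_
    intro heq
    have hw1' : (⟨w, hwS⟩ : ↥(commTuples k n r)) ∈ ZC s.succ := by
      show w ∈ CTD.Zset k n r ((s.succ : Fin _) : ℕ)
      rw [Fin.val_succ]
      exact hw1
    rw [← heq] at hw1'
    have : w ∈ CTD.Zset k n r ((Fin.castSucc s : Fin _) : ℕ) := hw1'
    rw [Fin.coe_castSucc] at this
    exact hw2 this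
  let series : LTSeries (IrreducibleCloseds ↥(commTuples k n r)) :=
    { length := CTD.numD n r
      toFun := ZC
      step := hstep }
  have h := Order.LTSeries.length_le_krullDim series
  have hlen : series.length = CTD.numD n r := rfl
  rw [hlen, CTD.numD_eq] at h
  exact h
end

section
/- For every integer s ≥ 1, the variety C_2(Γ) = {(x, y) ∈ Γ × Γ : xy = yx} has dimension at least 7s². -/
open MvPolynomial Matrix TopologicalSpace

/-- `Γ`: the set of `4s × 4s` matrices which, in `4 × 4` block form with `s × s` blocks,
have block `A₁` in positions `(1,2)` and `(2,4)`, `A₂` in position `(1,3)`, `A₃` in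
position `(1,4)`, `A₄` in position `(3,4)` (1-indexed blocks), and zero blocks elsewhere.
Block `(a, i)` of `Fin (4*s)` is realized via `finProdFinEquiv (a, i) = i + s·a`. -/
def Gamma (k : Type*) [Field k] (s : ℕ) : Set (Matrix (Fin (4 * s)) (Fin (4 * s)) k) :=
  {X | ∃ A₁ A₂ A₃ A₄ : Matrix (Fin s) (Fin s) k, ∀ (a b : Fin 4) (i j : Fin s),
    X (finProdFinEquiv (a, i)) (finProdFinEquiv (b, j)) =
      if a = 0 ∧ b = 1 then A₁ i j
      else if a = 1 ∧ b = 3 then A₁ i j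
      else if a = 0 ∧ b = 2 then A₂ i j
      else if a = 0 ∧ b = 3 then A₃ i j
      else if a = 2 ∧ b = 3 then A₄ i j
      else 0}

open Topology

namespace GammaAux

/-- entry reading map. -/
def ev {k : Type*} [CommSemiring k] {n r : ℕ} (x : Fin r → Matrix (Fin n) (Fin n) k) :
    Fin r × Fin n × Fin n → k :=
  fun q => x q.1 q.2.1 q.2.2

section Generic
variable {k : Type*} [Field k]

lemma aeval_eq_eval' {σ : Type*} (f : σ → k) (p : MvPolynomial σ k) :
    aeval f p = eval f p := by
  rw [← coe_aeval_eq_eval f]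
  rfl

lemma eval_bind₁' {σ τ : Type*} (x : τ → k) (g : σ → MvPolynomial τ k)
    (φ : MvPolynomial σ k) :
    eval x (bind₁ g φ) = eval (fun i => eval x (g i)) φ := by
  have h := aeval_bind₁ (S := k) x g φ
  simp only [aeval_eq_eval'] at h
  exact h

section Top

variable (k) (n r : ℕ)

lemma isOpen_ne (p : MvPolynomial (Fin r × Fin n × Fin n) k) :
    IsOpen[matTupleZariski k n r] {x | eval (ev x) p ≠ 0} :=
  TopologicalSpace.isOpen_generateFrom_of_mem ⟨p, rfl⟩

lemma isClosed_eq (p : MvPolynomial (Fin r × Fin n × Fin n) k) :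
    IsClosed[matTupleZariski k n r] {x | eval (ev x) p = 0} := by
  letI := matTupleZariski k n r
  rw [← isOpen_compl_iff]
  have : {x : Fin r → Matrix (Fin n) (Fin n) k | eval (ev x) p = 0}ᶜ
      = {x | eval (ev x) p ≠ 0} := by ext x; simp
  rw [this]; exact isOpen_ne k n r p

variable {n' r' : ℕ}

lemma continuous_of_poly (f : (Fin r → Matrix (Fin n) (Fin n) k) →
      (Fin r' → Matrix (Fin n') (Fin n') k))
    (ψ : Fin r' × Fin n' × Fin n' → MvPolynomial (Fin r × Fin n × Fin n) k)
    (h : ∀ x q, ev (f x) q = eval (ev x) (ψ q)) :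
    Continuous[matTupleZariski k n r, matTupleZariski k n' r'] f := by
  letI := matTupleZariski k n r
  refine continuous_generateFrom_iff.mpr ?_
  rintro U ⟨p, rfl⟩
  have : f ⁻¹' {y | eval (ev y) p ≠ 0} = {x | eval (ev x) (bind₁ ψ p) ≠ 0} := by
    ext x
    have hfg : (ev (f x)) = fun i => eval (ev x) (ψ i) := funext (h x)
    have : eval (ev (f x)) p = eval (ev x) (bind₁ ψ p) := by
      rw [eval_bind₁', hfg]
    simp only [Set.mem_preimage, Set.mem_setOf_eq]
    rw [this]
  rw [Set.preimage_setOf_eq] at this ⊢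
  rw [show (fun a => eval (fun q => f a q.1 q.2.1 q.2.2) p ≠ 0)
      = fun a => eval (ev (f a)) p ≠ 0 from rfl, this]
  exact isOpen_ne k n r _

lemma exists_basic {u : Set (Fin r → Matrix (Fin n) (Fin n) k)}
    (hu : TopologicalSpace.GenerateOpen
      {U | ∃ p : MvPolynomial (Fin r × Fin n × Fin n) k,
        U = {x | eval (fun q => x q.1 q.2.1 q.2.2) p ≠ 0}} u) :
    ∀ x ∈ u, ∃ p : MvPolynomial (Fin r × Fin n × Fin n) k,
      eval (ev x) p ≠ 0 ∧ {z | eval (ev z) p ≠ 0} ⊆ u := by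
  induction hu with
  | basic U hU =>
    obtain ⟨p, rfl⟩ := hU
    exact fun x hx => ⟨p, hx, fun z hz => hz⟩
  | univ => exact fun x _ => ⟨1, by simp, fun z _ => trivial⟩
  | inter U V hU hV ihU ihV =>
    rintro x ⟨hxU, hxV⟩
    obtain ⟨p, hp, hpU⟩ := ihU x hxU
    obtain ⟨q, hq, hqV⟩ := ihV x hxV
    refine ⟨p * q, by simp [mul_ne_zero hp hq], fun z hz => ?_⟩
    simp only [Set.mem_setOf_eq, _root_.map_mul, mul_ne_zero_iff] at hz
    exact ⟨hpU hz.1, hqV hz.2⟩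
  | sUnion S hS ih =>
    rintro x ⟨U, hU, hxU⟩
    obtain ⟨p, hp, hpU⟩ := ih U hU x hxU
    exact ⟨p, hp, fun z hz => ⟨U, hU, hpU hz⟩⟩

lemma isIrreducible_univ [Infinite k] :
    @IsIrreducible _ (matTupleZariski k n r)
      (Set.univ : Set (Fin r → Matrix (Fin n) (Fin n) k)) := by
  letI := matTupleZariski k n r
  constructor
  · exact ⟨fun _ => 0, trivial⟩
  · intro u v hu hv ⟨x, _, hxu⟩ ⟨y, _, hyv⟩
    obtain ⟨p, hp, hpu⟩ := exists_basic k n r hu x hxu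
    obtain ⟨q, hq, hqv⟩ := exists_basic k n r hv y hyv
    have hp0 : p ≠ 0 := fun h => hp (by simp [h])
    have hq0 : q ≠ 0 := fun h => hq (by simp [h])
    have hpq : p * q ≠ 0 := mul_ne_zero hp0 hq0
    have : ∃ g : Fin r × Fin n × Fin n → k, eval g (p * q) ≠ 0 := by
      by_contra h
      push_neg at h
      exact hpq (MvPolynomial.funext fun g => by simpa using h g)
    obtain ⟨g, hg⟩ := this
    set z : Fin r → Matrix (Fin n) (Fin n) k := fun m i j => g (m, i, j) with hz
    have hev : ev z = g := by
      funext q'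
      obtain ⟨a, b, c⟩ := q'
      rfl
    rw [_root_.map_mul] at hg
    refine ⟨z, trivial, hpu ?_, hqv ?_⟩
    · simp only [Set.mem_setOf_eq, hev]
      exact left_ne_zero_of_mul hg
    · simp only [Set.mem_setOf_eq, hev]
      exact right_ne_zero_of_mul hg

end Top
end Generic

section Blocks

variable {R : Type*} [CommRing R] {s : ℕ}

/-- block structure matrix on the product index -/
def gm (A₁ A₂ A₃ A₄ : Matrix (Fin s) (Fin s) R) :
    Matrix (Fin 4 × Fin s) (Fin 4 × Fin s) R :=
  fun p q =>
    if p.1 = 0 ∧ q.1 = 1 then A₁ p.2 q.2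
    else if p.1 = 1 ∧ q.1 = 3 then A₁ p.2 q.2
    else if p.1 = 0 ∧ q.1 = 2 then A₂ p.2 q.2
    else if p.1 = 0 ∧ q.1 = 3 then A₃ p.2 q.2
    else if p.1 = 2 ∧ q.1 = 3 then A₄ p.2 q.2
    else 0

/-- matrix supported on block (0,3) -/
def em (M : Matrix (Fin s) (Fin s) R) : Matrix (Fin 4 × Fin s) (Fin 4 × Fin s) R :=
  fun p q => if p.1 = 0 ∧ q.1 = 3 then M p.2 q.2 else 0

lemma gm_mul (A₁ A₂ A₃ A₄ B₁ B₂ B₃ B₄ : Matrix (Fin s) (Fin s) R) :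
    gm A₁ A₂ A₃ A₄ * gm B₁ B₂ B₃ B₄ = em (A₁ * B₁ + A₂ * B₄) := by
  ext ⟨a, i⟩ ⟨b, j⟩
  rw [Matrix.mul_apply]
  rw [Fintype.sum_prod_type]
  rw [Fin.sum_univ_four]
  fin_cases a <;> fin_cases b <;>
    simp [gm, em, Matrix.mul_apply, Matrix.add_apply, Finset.sum_add_distrib]

def G (A₁ A₂ A₃ A₄ : Matrix (Fin s) (Fin s) R) : Matrix (Fin (4 * s)) (Fin (4 * s)) R :=
  (gm A₁ A₂ A₃ A₄).submatrix
    (finProdFinEquiv (m := 4) (n := s)).symm (finProdFinEquiv (m := 4) (n := s)).symm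

lemma G_mul (A₁ A₂ A₃ A₄ B₁ B₂ B₃ B₄ : Matrix (Fin s) (Fin s) R) :
    G A₁ A₂ A₃ A₄ * G B₁ B₂ B₃ B₄
      = (em (A₁ * B₁ + A₂ * B₄)).submatrix
          (finProdFinEquiv (m := 4) (n := s)).symm (finProdFinEquiv (m := 4) (n := s)).symm := by
  rw [G, G, Matrix.submatrix_mul_equiv _ _ _ (finProdFinEquiv (m := 4) (n := s)).symm _, gm_mul]

lemma G_comm (A₁ A₂ A₃ A₄ C D B₃ : Matrix (Fin s) (Fin s) R) :
    G A₁ A₂ A₃ A₄ * G (A₄.det • C) ((A₁ * C + A₂ * D - C * A₁) * A₄.adjugate) B₃ (A₄.det • D)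
      = G (A₄.det • C) ((A₁ * C + A₂ * D - C * A₁) * A₄.adjugate) B₃ (A₄.det • D)
        * G A₁ A₂ A₃ A₄ := by
  rw [G_mul, G_mul]
  rw [Matrix.mul_assoc, Matrix.adjugate_mul]
  rw [mul_smul_comm, mul_smul_comm, smul_mul_assoc, mul_smul_comm, mul_one]
  rw [smul_sub, smul_add]
  abel_nf

lemma G_apply (A₁ A₂ A₃ A₄ : Matrix (Fin s) (Fin s) R) (a b : Fin 4) (i j : Fin s) :
    G A₁ A₂ A₃ A₄ (finProdFinEquiv (a, i)) (finProdFinEquiv (b, j)) =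
      if a = 0 ∧ b = 1 then A₁ i j
      else if a = 1 ∧ b = 3 then A₁ i j
      else if a = 0 ∧ b = 2 then A₂ i j
      else if a = 0 ∧ b = 3 then A₃ i j
      else if a = 2 ∧ b = 3 then A₄ i j
      else 0 := by
  simp only [G, Matrix.submatrix_apply, Equiv.symm_apply_apply]
  rfl

lemma G_map {S : Type*} [CommRing S] (f : R →+* S) (A₁ A₂ A₃ A₄ : Matrix (Fin s) (Fin s) R) :
    (G A₁ A₂ A₃ A₄).map f = G (A₁.map f) (A₂.map f) (A₃.map f) (A₄.map f) := by
  ext p q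
  simp only [G, Matrix.map_apply, Matrix.submatrix_apply, gm]
  split_ifs <;> simp

lemma G_mem_Gamma {k : Type*} [Field k] (A₁ A₂ A₃ A₄ : Matrix (Fin s) (Fin s) k) :
    G A₁ A₂ A₃ A₄ ∈ Gamma k s :=
  ⟨A₁, A₂, A₃, A₄, fun a b i j => G_apply A₁ A₂ A₃ A₄ a b i j⟩

end Blocks

section Param

variable (k : Type*) [Field k] (s : ℕ)

/-- the universal matrices of variables -/
noncomputable def XM (t : Fin 7) :
    Matrix (Fin s) (Fin s) (MvPolynomial (Fin 7 × Fin s × Fin s) k) :=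
  fun i j => X (t, i, j)

noncomputable def uB₁ : Matrix (Fin s) (Fin s) (MvPolynomial (Fin 7 × Fin s × Fin s) k) :=
  (XM k s 4).det • XM k s 5

noncomputable def uB₂ : Matrix (Fin s) (Fin s) (MvPolynomial (Fin 7 × Fin s × Fin s) k) :=
  (XM k s 0 * XM k s 5 + XM k s 1 * XM k s 6 - XM k s 5 * XM k s 0) * (XM k s 4).adjugate

noncomputable def uB₄ : Matrix (Fin s) (Fin s) (MvPolynomial (Fin 7 × Fin s × Fin s) k) :=
  (XM k s 4).det • XM k s 6

/-- the parametrization map -/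
noncomputable def Phi (P : Fin 7 → Matrix (Fin s) (Fin s) k) :
    Fin 2 → Matrix (Fin (4 * s)) (Fin (4 * s)) k :=
  fun m => if m = 0
    then (G (XM k s 0) (XM k s 1) (XM k s 2) (XM k s 4)).map (eval (ev P))
    else (G (uB₁ k s) (uB₂ k s) (XM k s 3) (uB₄ k s)).map (eval (ev P))

variable {k s}

lemma XM_map (P : Fin 7 → Matrix (Fin s) (Fin s) k) (t : Fin 7) :
    (XM k s t).map (eval (ev P)) = P t := by
  ext i j
  simp [XM, Matrix.map_apply, ev]

lemma Phi_zero (P : Fin 7 → Matrix (Fin s) (Fin s) k) :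
    Phi k s P 0 = G (P 0) (P 1) (P 2) (P 4) := by
  rw [Phi, if_pos rfl, G_map (eval (ev P)), XM_map, XM_map, XM_map, XM_map]

lemma Phi_one (P : Fin 7 → Matrix (Fin s) (Fin s) k) :
    Phi k s P 1 = G ((uB₁ k s).map (eval (ev P))) ((uB₂ k s).map (eval (ev P)))
      (P 3) ((uB₄ k s).map (eval (ev P))) := by
  rw [Phi, if_neg one_ne_zero, G_map (eval (ev P)), XM_map]

lemma uB₁_apply (P : Fin 7 → Matrix (Fin s) (Fin s) k) (i j : Fin s) :
    eval (ev P) (uB₁ k s i j)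
      = eval (ev P) ((XM k s 4).det) * P 5 i j := by
  have : uB₁ k s i j = (XM k s 4).det * X (5, i, j) := by
    simp [uB₁, Matrix.smul_apply, smul_eq_mul, XM]
  rw [this, _root_.map_mul, eval_X]
  rfl

lemma uB₄_apply (P : Fin 7 → Matrix (Fin s) (Fin s) k) (i j : Fin s) :
    eval (ev P) (uB₄ k s i j)
      = eval (ev P) ((XM k s 4).det) * P 6 i j := by
  have : uB₄ k s i j = (XM k s 4).det * X (6, i, j) := by
    simp [uB₄, Matrix.smul_apply, smul_eq_mul, XM]
  rw [this, _root_.map_mul, eval_X]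
  rfl

lemma Phi_mem_comm (P : Fin 7 → Matrix (Fin s) (Fin s) k) :
    Phi k s P 0 * Phi k s P 1 = Phi k s P 1 * Phi k s P 0 := by
  have h0 : Phi k s P 0 = (G (XM k s 0) (XM k s 1) (XM k s 2) (XM k s 4)).map (eval (ev P)) := by
    rw [Phi, if_pos rfl]
  have h1 : Phi k s P 1 = (G (uB₁ k s) (uB₂ k s) (XM k s 3) (uB₄ k s)).map (eval (ev P)) := by
    rw [Phi, if_neg one_ne_zero]
  have hcomm : G (XM k s 0) (XM k s 1) (XM k s 2) (XM k s 4)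
        * G (uB₁ k s) (uB₂ k s) (XM k s 3) (uB₄ k s)
      = G (uB₁ k s) (uB₂ k s) (XM k s 3) (uB₄ k s)
        * G (XM k s 0) (XM k s 1) (XM k s 2) (XM k s 4) := by
    rw [uB₁, uB₂, uB₄]
    exact G_comm (XM k s 0) (XM k s 1) (XM k s 2) (XM k s 4) (XM k s 5) (XM k s 6) (XM k s 3)
  rw [h0, h1, ← Matrix.map_mul, ← Matrix.map_mul, hcomm]

lemma Phi_mem_Gamma (P : Fin 7 → Matrix (Fin s) (Fin s) k) (m : Fin 2) :
    Phi k s P m ∈ Gamma k s := by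
  fin_cases m
  · rw [show (⟨0, by norm_num⟩ : Fin 2) = 0 from rfl, Phi_zero]
    exact G_mem_Gamma _ _ _ _
  · rw [show (⟨1, by norm_num⟩ : Fin 2) = 1 from rfl, Phi_one]
    exact G_mem_Gamma _ _ _ _

/-- coordinate ordering on parameters -/
def onum (t : Fin 7) (i j : Fin s) : ℕ := ((t : ℕ) * s + (i : ℕ)) * s + (j : ℕ)

/-- truncation maps -/
def zmap (N : ℕ) (P : Fin 7 → Matrix (Fin s) (Fin s) k) :
    Fin 7 → Matrix (Fin s) (Fin s) k :=
  fun t => Matrix.of fun i j => if onum t i j < N then P t i j else 0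

lemma zmap_zmap {M N : ℕ} (h : M ≤ N) (P : Fin 7 → Matrix (Fin s) (Fin s) k) :
    zmap N (zmap M P) = zmap M P := by
  funext t
  ext i j
  simp only [zmap, Matrix.of_apply]
  split_ifs with h1 h2 <;>
    first
      | rfl
      | exact absurd (lt_of_lt_of_le ‹_› h) ‹_›

/-- witness points -/
def wpt (t : Fin 7) (i j : Fin s) : Fin 7 → Matrix (Fin s) (Fin s) k :=
  fun t' => if t' = t then Matrix.single i j 1
    else if t' = 4 ∧ 5 ≤ (t : ℕ) then 1 else 0

lemma onum_lt {t : Fin 7} {i j a b : Fin s} (h5 : 5 ≤ (t : ℕ)) :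
    onum (4 : Fin 7) a b < onum t i j := by
  have ha := a.is_lt
  have hb := b.is_lt
  have hi := i.is_lt
  have hj := j.is_lt
  simp only [onum]
  have h4 : ((4 : Fin 7) : ℕ) = 4 := rfl
  rw [h4]
  calc (4 * s + (a : ℕ)) * s + (b : ℕ) < (4 * s + (a : ℕ)) * s + s := by omega
    _ = (4 * s + (a : ℕ) + 1) * s := by ring
    _ ≤ (5 * s) * s := by
        apply Nat.mul_le_mul_right
        omega
    _ ≤ ((t : ℕ) * s) * s := by
        apply Nat.mul_le_mul_right
        apply Nat.mul_le_mul_right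
        omega
    _ ≤ ((t : ℕ) * s + (i : ℕ)) * s + (j : ℕ) := by
        have := Nat.mul_le_mul_right s (Nat.le_add_right ((t : ℕ) * s) (i : ℕ))
        omega

lemma zmap_wpt {t : Fin 7} {i j : Fin s} {N : ℕ} (h : onum t i j < N) :
    zmap N (wpt t i j) = (wpt t i j : Fin 7 → Matrix (Fin s) (Fin s) k) := by
  funext t'
  ext a b
  simp only [zmap, Matrix.of_apply]
  by_cases h1 : onum t' a b < N
  · rw [if_pos h1]
  · rw [if_neg h1]
    by_cases ht : t' = t
    · subst ht
      rw [wpt, if_pos rfl]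
      rcases eq_or_ne a i with rfl | ha
      · rcases eq_or_ne b j with rfl | hb
        · exact absurd h h1
        · exact (Matrix.single_apply_of_ne _ _ _ _ _ (by tauto)).symm
      · exact (Matrix.single_apply_of_ne _ _ _ _ _
          (by intro hc; exact ha hc.1.symm)).symm
    · rw [wpt, if_neg ht]
      by_cases h4 : t' = 4 ∧ 5 ≤ (t : ℕ)
      · rw [if_pos h4]
        rcases eq_or_ne a b with rfl | hab
        · exfalso
          apply h1
          calc onum t' a a = onum (4 : Fin 7) a a := by rw [h4.1]
            _ < onum t i j := onum_lt h4.2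
            _ < N := h
        · exact (Matrix.one_apply_ne hab).symm
      · rw [if_neg h4]
        simp

/-- the separating coordinates -/
def kap (t : Fin 7) (i j : Fin s) : Fin 2 × Fin (4 * s) × Fin (4 * s) :=
  if t = 0 then (0, finProdFinEquiv (0, i), finProdFinEquiv (1, j))
  else if t = 1 then (0, finProdFinEquiv (0, i), finProdFinEquiv (2, j))
  else if t = 2 then (0, finProdFinEquiv (0, i), finProdFinEquiv (3, j))
  else if t = 3 then (1, finProdFinEquiv (0, i), finProdFinEquiv (3, j))
  else if t = 4 then (0, finProdFinEquiv (2, i), finProdFinEquiv (3, j))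
  else if t = 5 then (1, finProdFinEquiv (0, i), finProdFinEquiv (1, j))
  else (1, finProdFinEquiv (2, i), finProdFinEquiv (3, j))

lemma Phi_kap (P : Fin 7 → Matrix (Fin s) (Fin s) k) (t : Fin 7) (i j : Fin s) :
    Phi k s P (kap t i j).1 (kap t i j).2.1 (kap t i j).2.2 =
      if (t : ℕ) ≤ 4 then P t i j
      else eval (ev P) ((XM k s 4).det) * P t i j := by
  fin_cases t <;>
    simp [kap, Phi_zero, Phi_one, G_apply, uB₁_apply, uB₄_apply]

end Param

end GammaAux

lemma le_topologicalKrullDim_of_chain {α : Type*} [TopologicalSpace α] (m : ℕ)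
    (Z : ℕ → Set α)
    (hcl : ∀ j, IsClosed (Z j)) (hirr : ∀ j, IsIrreducible (Z j))
    (hmono : ∀ a b : ℕ, a ≤ b → Z a ⊆ Z b)
    (hstrict : ∀ j, j < m → Z j ≠ Z (j + 1)) :
    (m : WithBot ℕ∞) ≤ topologicalKrullDim α := by
  let C : Fin (m + 1) → IrreducibleCloseds α := fun j => ⟨Z j, hirr j, hcl j⟩
  have hC : ∀ a b : Fin (m + 1), a < b → C a < C b := by
    intro a b hab
    have hab' : (a : ℕ) < (b : ℕ) := hab
    have hle : Z (a : ℕ) ⊆ Z (b : ℕ) := hmono _ _ (le_of_lt hab')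
    have hne : Z (a : ℕ) ≠ Z (b : ℕ) := by
      intro hEq
      apply hstrict a (lt_of_lt_of_le hab' (Nat.lt_succ_iff.mp b.is_lt))
      refine subset_antisymm (hmono _ _ (Nat.le_succ a)) ?_
      calc Z ((a : ℕ) + 1) ⊆ Z (b : ℕ) := hmono _ _ hab'
        _ = Z (a : ℕ) := hEq.symm
    refine lt_of_le_of_ne ?_ ?_
    · exact SetLike.coe_subset_coe.mp hle
    · intro hEq
      exact hne (congrArg IrreducibleCloseds.carrier hEq)
  let p : LTSeries (IrreducibleCloseds α) :=
    ⟨m, fun j => C j, fun j => hC _ _ (Fin.castSucc_lt_succ (i := j))⟩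
  exact Order.LTSeries.length_le_krullDim p


open GammaAux

/-- For every integer `s ≥ 1`, the variety `C₂(Γ) = {(x, y) ∈ Γ × Γ : xy = yx}` has
dimension at least `7s²`. -/
theorem dim_commPairs_Gamma_ge (k : Type*) [Field k] [IsAlgClosed k]
    (s : ℕ) (hs : 1 ≤ s) :
    letI := matTupleZariski k (4 * s) 2
    ((7 * s ^ 2 : ℕ) : WithBot ℕ∞)
      ≤ topologicalKrullDim
          {x : Fin 2 → Matrix (Fin (4 * s)) (Fin (4 * s)) k |
            (∀ i, x i ∈ Gamma k s) ∧ x 0 * x 1 = x 1 * x 0} := by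
  letI := matTupleZariski k (4 * s) 2
  letI := matTupleZariski k s 7
  show ((7 * s ^ 2 : ℕ) : WithBot ℕ∞) ≤ topologicalKrullDim
      {x : Fin 2 → Matrix (Fin (4 * s)) (Fin (4 * s)) k |
        (∀ i, x i ∈ Gamma k s) ∧ x 0 * x 1 = x 1 * x 0}
  have spos : 0 < s := hs
  set S := {x : Fin 2 → Matrix (Fin (4 * s)) (Fin (4 * s)) k |
      (∀ i, x i ∈ Gamma k s) ∧ x 0 * x 1 = x 1 * x 0} with hSdef
  have hmem : ∀ P : Fin 7 → Matrix (Fin s) (Fin s) k, Phi k s P ∈ S :=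
    fun P => ⟨Phi_mem_Gamma P, Phi_mem_comm P⟩
  have hcontz : ∀ N : ℕ, Continuous (zmap (k := k) (s := s) N) := by
    intro N
    apply continuous_of_poly k s 7 (n' := s) (r' := 7) _
      (fun q => if onum q.1 q.2.1 q.2.2 < N then X q else 0)
    intro P q
    rcases q with ⟨t, a, b⟩
    simp [ev, zmap, apply_ite (eval (ev P))]
  have hcontPhi : Continuous (Phi k s) := by
    apply continuous_of_poly k s 7 (n' := 4 * s) (r' := 2) _
      (fun q => if q.1 = 0
        then G (XM k s 0) (XM k s 1) (XM k s 2) (XM k s 4) q.2.1 q.2.2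
        else G (uB₁ k s) (uB₂ k s) (XM k s 3) (uB₄ k s) q.2.1 q.2.2)
    intro P q
    rcases q with ⟨m, p, q'⟩
    by_cases hm : m = 0 <;> simp [ev, Phi, hm, Matrix.map_apply]
  let F : ℕ → (Fin 7 → Matrix (Fin s) (Fin s) k) → S :=
    fun N P => ⟨Phi k s (zmap N P), hmem _⟩
  let Z : ℕ → Set S := fun N => closure (Set.range (F N))
  have hcl : ∀ N, IsClosed (Z N) := fun N => isClosed_closure
  have hcontF : ∀ N, Continuous (F N) :=
    fun N => (hcontPhi.comp (hcontz N)).subtype_mk _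
  have hirr : ∀ N, IsIrreducible (Z N) := by
    intro N
    have h1 : @IsIrreducible _ (matTupleZariski k s 7)
        (Set.univ : Set (Fin 7 → Matrix (Fin s) (Fin s) k)) :=
      isIrreducible_univ k s 7
    have h2 := h1.image (F N) (hcontF N).continuousOn
    rw [Set.image_univ] at h2
    exact h2.closure
  have hmono : ∀ a b : ℕ, a ≤ b → Z a ⊆ Z b := by
    intro a b hab
    apply closure_mono
    rintro _ ⟨P, rfl⟩
    exact ⟨zmap a P, Subtype.ext (congrArg (Phi k s) (zmap_zmap hab P))⟩
  have hstrict : ∀ j, j < 7 * s ^ 2 → Z j ≠ Z (j + 1) := by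
    intro j hj
    have hj' : j < 7 * (s * s) := by rw [← pow_two]; exact hj
    have ht7 : j / (s * s) < 7 := by
      rwa [Nat.div_lt_iff_lt_mul (Nat.mul_pos spos spos)]
    have hmlt : j % (s * s) < s * s := Nat.mod_lt _ (Nat.mul_pos spos spos)
    have hi : j % (s * s) / s < s := by
      rwa [Nat.div_lt_iff_lt_mul spos]
    set t : Fin 7 := ⟨j / (s * s), ht7⟩ with htdef
    set i : Fin s := ⟨j % (s * s) / s, hi⟩ with hidef
    set i2 : Fin s := ⟨j % (s * s) % s, Nat.mod_lt _ spos⟩ with hi2def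
    have hdec : onum t i i2 = j := by
      have h1 := Nat.div_add_mod (j % (s * s)) s
      have h2 := Nat.div_add_mod j (s * s)
      simp only [onum, htdef, hidef, hi2def]
      have e1 : ((j / (s * s)) * s + j % (s * s) / s) * s + j % (s * s) % s
          = (s * s) * (j / (s * s)) + (s * (j % (s * s) / s) + j % (s * s) % s) := by ring
      rw [e1, h1, h2]
    have hHcl : IsClosed {v : S | (v : Fin 2 → Matrix (Fin (4 * s)) (Fin (4 * s)) k)
        (kap t i i2).1 (kap t i i2).2.1 (kap t i i2).2.2 = 0} := by
      have hc := isClosed_eq k (4 * s) 2 (X (kap t i i2))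
      have heq : {x : Fin 2 → Matrix (Fin (4 * s)) (Fin (4 * s)) k |
            eval (ev x) (X (kap t i i2)) = 0}
          = {x | x (kap t i i2).1 (kap t i i2).2.1 (kap t i i2).2.2 = 0} := by
        ext x; simp [eval_X, ev]
      rw [heq] at hc
      exact hc.preimage continuous_subtype_val
    have hZH : Z j ⊆ {v : S | (v : Fin 2 → Matrix (Fin (4 * s)) (Fin (4 * s)) k)
        (kap t i i2).1 (kap t i i2).2.1 (kap t i i2).2.2 = 0} := by
      apply closure_minimal _ hHcl
      rintro _ ⟨P, rfl⟩
      show Phi k s (zmap j P) (kap t i i2).1 (kap t i i2).2.1 (kap t i i2).2.2 = 0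
      rw [Phi_kap]
      have hz : zmap j P t i i2 = 0 := by
        simp only [zmap, Matrix.of_apply, hdec]
        simp
      split_ifs <;> simp [hz]
    have hw : Phi k s (zmap (j + 1) (wpt t i i2))
        (kap t i i2).1 (kap t i i2).2.1 (kap t i i2).2.2 = 1 := by
      rw [zmap_wpt (by rw [hdec]; omega), Phi_kap]
      split_ifs with h4
      · simp [wpt]
      · have h5 : 5 ≤ (t : ℕ) := by omega
        have hXmap : (XM k s 4).map (eval (ev (wpt t i i2)))
            = (1 : Matrix (Fin s) (Fin s) k) := by
          ext a b
          simp only [XM, Matrix.map_apply, eval_X]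
          show wpt t i i2 4 a b = _
          rw [wpt, if_neg (by
            intro hc
            rw [← hc] at h5
            exact absurd h5 (by decide)), if_pos ⟨rfl, h5⟩]
        have hdet : eval (ev (wpt t i i2)) ((XM k s 4).det) = 1 := by
          rw [RingHom.map_det, RingHom.mapMatrix_apply, hXmap, Matrix.det_one]
        rw [hdet]
        simp [wpt]
    intro hEq
    have hmem2 : F (j + 1) (wpt t i i2) ∈ Z j :=
      hEq ▸ subset_closure ⟨_, rfl⟩
    have h0 := hZH hmem2
    simp only [Set.mem_setOf_eq, hw] at h0
    exact (one_ne_zero : (1 : k) ≠ 0) (hw.symm.trans h0)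
  exact le_topologicalKrullDim_of_chain (7 * s ^ 2) Z hcl hirr hmono hstrict
end
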